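/- arXiv:0812.4843 — 9 statements merged into one kernel-verified Lean document; each statement's English description precedes it below -/
import Mathlib

section
/- The iteration map T : Ω → Ω induced by the preconditioned equations (i.e., T(r^p) is the unique r^{p+1} ∈ Ω with ψ^QCE_j(r^{p+1}) + ψ^G_j(r^p) + Φ_j = 0 for all j) is a contraction in the maximum norm: if r^p ↦ r^{p+1} and s^p ↦ s^{p+1} under T, then ‖r^{p+1} − s^{p+1}‖_∞ ≤ α ‖r^p − s^p‖_∞ where α := 16|φ''(2 r_L)| / (φ''(r_U) − 5|φ''(2 r_L)|), and moreover α < 1. -/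
open Finset

/-- `I_j(r) := 2φ'(2r_j) − φ'(r_j + r_{j−1}) − φ'(r_j + r_{j+1})`. -/
noncomputable def Ifun (φ : ℝ → ℝ) (r : ℤ → ℝ) (j : ℤ) : ℝ :=
  2 * deriv φ (2 * r j) - deriv φ (r j + r (j - 1)) - deriv φ (r j + r (j + 1))

/-- The force-based conjugate forces `ψ^QCF_j(r)` (for `−N ≤ j ≤ N`). -/
noncomputable def psiQCF (φ : ℝ → ℝ) (K : ℤ) (r : ℤ → ℝ) (j : ℤ) : ℝ :=
  if j ≤ -K then -(deriv φ (r j) + 2 * deriv φ (2 * r j))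
  else if j ≤ K then
    -(deriv φ (r j) + deriv φ (r j + r (j - 1)) + deriv φ (r j + r (j + 1)) +
      Ifun φ r (-K))
  else -(deriv φ (r j) + 2 * deriv φ (2 * r j) + Ifun φ r (-K) - Ifun φ r K)

/-- Atomistic site energy `E^a_j(r)`. -/
noncomputable def Ea (φ : ℝ → ℝ) (r : ℤ → ℝ) (j : ℤ) : ℝ :=
  (φ (r j) + φ (r j + r (j + 1)) + φ (r (j - 1)) + φ (r (j - 1) + r (j - 2))) / 2

/-- Continuum (local) site energy `E^L_j(r)`; terms with index outside `{−N, …, N}`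
are set to zero. -/
noncomputable def EL (φ : ℝ → ℝ) (N : ℤ) (ν : ℤ → ℤ) (r : ℤ → ℝ) (j : ℤ) : ℝ :=
  ((if -N ≤ j ∧ j ≤ N then (ν j : ℝ) * (φ (r j) + φ (2 * r j)) else 0) +
   (if -N ≤ j - 1 ∧ j - 1 ≤ N then
      (ν (j - 1) : ℝ) * (φ (r (j - 1)) + φ (2 * r (j - 1))) else 0)) / 2

/-- The energy-based quasicontinuum energy `E^QCE(r)`. -/
noncomputable def EQCE (φ : ℝ → ℝ) (N K : ℤ) (ν : ℤ → ℤ) (r : ℤ → ℝ) : ℝ :=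
  (∑ j ∈ Icc (-N) (-K), EL φ N ν r j) + (∑ j ∈ Icc (-K + 1) K, Ea φ r j) +
    (∑ j ∈ Icc (K + 1) (N + 1), EL φ N ν r j)

/-- The energy-based conjugate forces `ψ^QCE_j(r) := −ν_j⁻¹ ∂E^QCE(r)/∂r_j`. -/
noncomputable def psiQCE (φ : ℝ → ℝ) (N K : ℤ) (ν : ℤ → ℤ) (r : ℤ → ℝ) (j : ℤ) : ℝ :=
  -((ν j : ℝ))⁻¹ * deriv (fun t => EQCE φ N K ν (Function.update r j t)) (r j)

/-- The ghost-force correction `ψ^G_j(r) := ψ^QCF_j(r) − ψ^QCE_j(r)`. -/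
noncomputable def psiG (φ : ℝ → ℝ) (N K : ℤ) (ν : ℤ → ℤ) (r : ℤ → ℝ) (j : ℤ) : ℝ :=
  psiQCF φ K r j - psiQCE φ N K ν r j

/-! ### Auxiliary coefficient functions -/

/-- Coefficient of `φ'(2 r_j)` in the explicit formula for `ψ^QCE_j`. -/
noncomputable def bbQ (K j : ℤ) : ℝ :=
  (if j ≤ -K then (1 : ℝ) else 0) + (if j ≤ -K - 1 then 1 else 0) +
    (if K + 1 ≤ j then 1 else 0) + (if K ≤ j then 1 else 0)

/-- Coefficient of `φ'(r_i + r_{i+1})` in the explicit formula for `ψ^QCE`. -/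
noncomputable def ccQ (K i : ℤ) : ℝ :=
  ((if -K + 1 ≤ i ∧ i ≤ K then (1 : ℝ) else 0) +
    (if -K - 1 ≤ i ∧ i ≤ K - 2 then 1 else 0)) / 2

lemma bbQ_nonneg (K j : ℤ) : 0 ≤ bbQ K j := by
  unfold bbQ; split_ifs <;> norm_num

lemma ccQ_nonneg (K i : ℤ) : 0 ≤ ccQ K i := by
  unfold ccQ; split_ifs <;> norm_num

lemma ccQ_ne (K i : ℤ) (h : ccQ K i ≠ 0) : -K - 1 ≤ i ∧ i ≤ K := by
  unfold ccQ at h; split_ifs at h <;> first | omega | norm_num at h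

lemma bbcc_le (K : ℤ) (hK : 2 ≤ K) (j : ℤ) :
    bbQ K j + ccQ K j + ccQ K (j - 1) ≤ 5 / 2 := by
  unfold bbQ ccQ
  split_ifs <;> first | (exfalso; omega) | norm_num

/-! ### Differentiability helpers -/

lemma aux_hder {φ : ℝ → ℝ} (hφ : ContDiffOn ℝ 3 φ (Set.Ioi 0)) {x : ℝ} (hx : 0 < x) :
    HasDerivAt φ (deriv φ x) x :=
  ((hφ.differentiableOn (by norm_num)).differentiableAt (isOpen_Ioi.mem_nhds hx)).hasDerivAt

lemma aux_hder_addr {φ : ℝ → ℝ} (hφ : ContDiffOn ℝ 3 φ (Set.Ioi 0)) {c x : ℝ}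
    (h : 0 < x + c) : HasDerivAt (fun t => φ (t + c)) (deriv φ (x + c)) x := by
  simpa [Function.comp_def] using (aux_hder hφ h).comp x ((hasDerivAt_id x).add_const c)

lemma aux_hder_addl {φ : ℝ → ℝ} (hφ : ContDiffOn ℝ 3 φ (Set.Ioi 0)) {c x : ℝ}
    (h : 0 < c + x) : HasDerivAt (fun t => φ (c + t)) (deriv φ (c + x)) x := by
  simpa [Function.comp_def] using (aux_hder hφ h).comp x ((hasDerivAt_id x).const_add c)

lemma aux_hder_two {φ : ℝ → ℝ} (hφ : ContDiffOn ℝ 3 φ (Set.Ioi 0)) {x : ℝ}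
    (h : 0 < x) : HasDerivAt (fun t => φ (2 * t)) (2 * deriv φ (2 * x)) x := by
  have h2 : (0 : ℝ) < 2 * x := by linarith
  have h := (aux_hder hφ h2).comp x ((hasDerivAt_id x).const_mul 2)
  have h' : HasDerivAt (fun t => φ (2 * t)) (deriv φ (2 * x) * (2 * 1)) x := h
  convert h' using 1
  ring

/-- Derivative of a single continuum site-energy term under `Function.update`. -/
lemma aux_EL_deriv {φ : ℝ → ℝ} (hφ : ContDiffOn ℝ 3 φ (Set.Ioi 0)) (N : ℤ) (ν : ℤ → ℤ)
    (r : ℤ → ℝ) (j : ℤ) (hjN : -N ≤ j ∧ j ≤ N) (hrj : 0 < r j) (i : ℤ) :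
    HasDerivAt (fun t => EL φ N ν (Function.update r j t) i)
      ((if i = j then (ν j : ℝ) * (deriv φ (r j) + 2 * deriv φ (2 * r j)) / 2 else 0) +
       (if i = j + 1 then (ν j : ℝ) * (deriv φ (r j) + 2 * deriv φ (2 * r j)) / 2 else 0))
      (r j) := by
  have hbase : HasDerivAt (fun t : ℝ => (ν j : ℝ) * (φ t + φ (2 * t)))
      ((ν j : ℝ) * (deriv φ (r j) + 2 * deriv φ (2 * r j))) (r j) :=
    ((aux_hder hφ hrj).add (aux_hder_two hφ hrj)).const_mul _
  by_cases hij : i = j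
  · subst hij
    rw [if_pos rfl, if_neg (by omega : ¬ i = i + 1), add_zero]
    have hfun : (fun t => EL φ N ν (Function.update r i t) i) =
        (fun t => ((ν i : ℝ) * (φ t + φ (2 * t)) +
          (if -N ≤ i - 1 ∧ i - 1 ≤ N then
            (ν (i - 1) : ℝ) * (φ (r (i - 1)) + φ (2 * r (i - 1))) else 0)) / 2) := by
      funext t
      rw [EL, Function.update_self, Function.update_of_ne (by omega : i - 1 ≠ i),
        if_pos hjN]
    rw [hfun]
    exact (hbase.add_const _).div_const 2
  · by_cases hij1 : i = j + 1
    · subst hij1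
      rw [if_neg hij, if_pos rfl, zero_add]
      have hfun : (fun t => EL φ N ν (Function.update r j t) (j + 1)) =
          (fun t => ((if -N ≤ j + 1 ∧ j + 1 ≤ N then
              (ν (j + 1) : ℝ) * (φ (r (j + 1)) + φ (2 * r (j + 1))) else 0) +
            (ν j : ℝ) * (φ t + φ (2 * t))) / 2) := by
        funext t
        rw [EL, Function.update_of_ne (by omega : j + 1 ≠ j),
          show j + 1 - 1 = j from by ring, Function.update_self, if_pos hjN]
      rw [hfun]
      exact (((hasDerivAt_const _ _).fun_add hbase).div_const 2).congr_deriv (by ring)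
    · rw [if_neg hij, if_neg hij1, add_zero]
      have hfun : (fun t => EL φ N ν (Function.update r j t) i) =
          (fun _ => EL φ N ν r i) := by
        funext t
        rw [EL, EL, Function.update_of_ne hij, Function.update_of_ne (by omega : i - 1 ≠ j)]
      rw [hfun]
      exact hasDerivAt_const _ _

/-- Derivative of a single atomistic site-energy term under `Function.update`. -/
lemma aux_Ea_deriv {φ : ℝ → ℝ} (hφ : ContDiffOn ℝ 3 φ (Set.Ioi 0)) (K : ℤ) (hK : 2 ≤ K)
    (r : ℤ → ℝ) (j : ℤ)
    (hsafe : ∀ l : ℤ, -K - 1 ≤ l → l ≤ K + 1 → 0 < r l) (i : ℤ)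
    (hi : -K + 1 ≤ i ∧ i ≤ K) :
    HasDerivAt (fun t => Ea φ (Function.update r j t) i)
      ((if i = j then (deriv φ (r j) + deriv φ (r j + r (j + 1))) / 2 else 0) +
       (if i = j - 1 then deriv φ (r (j - 1) + r j) / 2 else 0) +
       (if i = j + 1 then (deriv φ (r j) + deriv φ (r j + r (j - 1))) / 2 else 0) +
       (if i = j + 2 then deriv φ (r (j + 1) + r j) / 2 else 0)) (r j) := by
  by_cases h1 : i = j
  · subst h1
    rw [if_pos rfl, if_neg (by omega : ¬ i = i - 1), if_neg (by omega : ¬ i = i + 1),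
      if_neg (by omega : ¬ i = i + 2), add_zero, add_zero, add_zero]
    have hri : 0 < r i := hsafe i (by omega) (by omega)
    have hri1 : 0 < r (i + 1) := hsafe _ (by omega) (by omega)
    have hfun : (fun t => Ea φ (Function.update r i t) i) =
        (fun t => (φ t + φ (t + r (i + 1)) + φ (r (i - 1)) +
          φ (r (i - 1) + r (i - 2))) / 2) := by
      funext t
      rw [Ea, Function.update_self, Function.update_of_ne (by omega : i + 1 ≠ i),
        Function.update_of_ne (by omega : i - 1 ≠ i),
        Function.update_of_ne (by omega : i - 2 ≠ i)]
    rw [hfun]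
    have hd1 := aux_hder hφ hri
    have hd2 : HasDerivAt (fun t => φ (t + r (i + 1))) (deriv φ (r i + r (i + 1))) (r i) :=
      aux_hder_addr hφ (by linarith)
    exact (((hd1.add hd2).add_const _).add_const _).div_const 2
  · by_cases h2 : i = j - 1
    · subst h2
      rw [if_neg h1, if_pos rfl, if_neg (by omega : ¬ j - 1 = j + 1),
        if_neg (by omega : ¬ j - 1 = j + 2), add_zero, add_zero, zero_add]
      have hrj : 0 < r j := hsafe j (by omega) (by omega)
      have hrj1 : 0 < r (j - 1) := hsafe _ (by omega) (by omega)
      have hfun : (fun t => Ea φ (Function.update r j t) (j - 1)) =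
          (fun t => (φ (r (j - 1)) + φ (r (j - 1) + t) + φ (r (j - 1 - 1)) +
            φ (r (j - 1 - 1) + r (j - 1 - 2))) / 2) := by
        funext t
        rw [Ea, show j - 1 + 1 = j from by ring, Function.update_self,
          Function.update_of_ne (by omega : j - 1 ≠ j),
          Function.update_of_ne (by omega : j - 1 - 1 ≠ j),
          Function.update_of_ne (by omega : j - 1 - 2 ≠ j)]
      rw [hfun]
      have hd2 : HasDerivAt (fun t => φ (r (j - 1) + t)) (deriv φ (r (j - 1) + r j)) (r j) :=
        aux_hder_addl hφ (by linarith)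
      exact (((((hasDerivAt_const (r j) (φ (r (j - 1)))).fun_add hd2).add_const
        _).add_const _).div_const 2).congr_deriv (by ring)
    · by_cases h3 : i = j + 1
      · subst h3
        rw [if_neg h1, if_neg h2, if_pos rfl, if_neg (by omega : ¬ j + 1 = j + 2),
          add_zero, zero_add, zero_add]
        have hrj : 0 < r j := hsafe j (by omega) (by omega)
        have hrj1 : 0 < r (j - 1) := hsafe _ (by omega) (by omega)
        have hfun : (fun t => Ea φ (Function.update r j t) (j + 1)) =
            (fun t => (φ (r (j + 1)) + φ (r (j + 1) + r (j + 1 + 1)) + φ t +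
              φ (t + r (j - 1))) / 2) := by
          funext t
          rw [Ea, Function.update_of_ne (by omega : j + 1 ≠ j),
            Function.update_of_ne (by omega : j + 1 + 1 ≠ j),
            show j + 1 - 1 = j from by ring, Function.update_self,
            show j + 1 - 2 = j - 1 from by ring,
            Function.update_of_ne (by omega : j - 1 ≠ j)]
        rw [hfun]
        have hd1 := aux_hder hφ hrj
        have hd2 : HasDerivAt (fun t => φ (t + r (j - 1))) (deriv φ (r j + r (j - 1))) (r j) :=
          aux_hder_addr hφ (by linarith)
        exact ((((hasDerivAt_const (r j) (φ (r (j + 1)))).fun_add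
          (hasDerivAt_const (r j) (φ (r (j + 1) + r (j + 1 + 1))))).fun_add hd1).fun_add
          hd2 |>.div_const 2).congr_deriv (by ring)
      · by_cases h4 : i = j + 2
        · subst h4
          rw [if_neg h1, if_neg h2, if_neg h3, if_pos rfl, zero_add, zero_add, zero_add]
          have hrj : 0 < r j := hsafe j (by omega) (by omega)
          have hrj1 : 0 < r (j + 1) := hsafe _ (by omega) (by omega)
          have hfun : (fun t => Ea φ (Function.update r j t) (j + 2)) =
              (fun t => (φ (r (j + 2)) + φ (r (j + 2) + r (j + 2 + 1)) + φ (r (j + 1)) +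
                φ (r (j + 1) + t)) / 2) := by
            funext t
            rw [Ea, Function.update_of_ne (by omega : j + 2 ≠ j),
              Function.update_of_ne (by omega : j + 2 + 1 ≠ j),
              show j + 2 - 1 = j + 1 from by ring,
              Function.update_of_ne (by omega : j + 1 ≠ j),
              show j + 2 - 2 = j from by ring, Function.update_self]
          rw [hfun]
          have hd2 : HasDerivAt (fun t => φ (r (j + 1) + t)) (deriv φ (r (j + 1) + r j)) (r j) :=
            aux_hder_addl hφ (by linarith)
          exact (((((hasDerivAt_const (r j) (φ (r (j + 2)))).fun_add
            (hasDerivAt_const (r j) (φ (r (j + 2) + r (j + 2 + 1))))).fun_add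
            (hasDerivAt_const (r j) (φ (r (j + 1))))).fun_add hd2).div_const 2).congr_deriv (by ring)
        · rw [if_neg h1, if_neg h2, if_neg h3, if_neg h4, add_zero, add_zero, add_zero]
          have hfun : (fun t => Ea φ (Function.update r j t) i) =
              (fun _ => Ea φ r i) := by
            funext t
            rw [Ea, Ea, Function.update_of_ne (by omega : i ≠ j),
              Function.update_of_ne (by omega : i + 1 ≠ j),
              Function.update_of_ne (by omega : i - 1 ≠ j),
              Function.update_of_ne (by omega : i - 2 ≠ j)]
          rw [hfun]
          exact hasDerivAt_const _ _

/-! ### Explicit formula for `ψ^QCE` -/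

lemma psiQCE_formula {φ : ℝ → ℝ} (hφ : ContDiffOn ℝ 3 φ (Set.Ioi 0)) (N K : ℤ)
    (hK : 2 ≤ K) (hN : K + 2 ≤ N) (ν : ℤ → ℤ)
    (hν1 : ∀ j ∈ Icc (-K - 1) (K + 1), ν j = 1)
    (hν0 : ∀ j ∈ Icc (-N) N, 1 ≤ ν j)
    (r : ℤ → ℝ) (hr : ∀ i ∈ Icc (-N) N, 0 < r i) (j : ℤ) (hj : j ∈ Icc (-N) N) :
    psiQCE φ N K ν r j =
      -(deriv φ (r j) + bbQ K j * deriv φ (2 * r j) +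
        ccQ K j * deriv φ (r j + r (j + 1)) +
        ccQ K (j - 1) * deriv φ (r j + r (j - 1))) := by
  simp only [Finset.mem_Icc] at hj
  have hrj : 0 < r j := hr j (Finset.mem_Icc.mpr ⟨hj.1, hj.2⟩)
  have hsafe : ∀ l : ℤ, -K - 1 ≤ l → l ≤ K + 1 → 0 < r l := fun l h1 h2 =>
    hr l (Finset.mem_Icc.mpr ⟨by omega, by omega⟩)
  have hsum1 := HasDerivAt.fun_sum
    (fun i (_ : i ∈ Icc (-N) (-K)) => aux_EL_deriv hφ N ν r j hj hrj i)
  have hsum2 := HasDerivAt.fun_sum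
    (fun i (hi : i ∈ Icc (-K + 1) K) =>
      aux_Ea_deriv hφ K hK r j hsafe i (Finset.mem_Icc.mp hi))
  have hsum3 := HasDerivAt.fun_sum
    (fun i (_ : i ∈ Icc (K + 1) (N + 1)) => aux_EL_deriv hφ N ν r j hj hrj i)
  have htot := (hsum1.fun_add hsum2).fun_add hsum3
  rw [psiQCE,
    show (fun t : ℝ => EQCE φ N K ν (Function.update r j t)) =
      (fun t : ℝ => (∑ i ∈ Icc (-N) (-K), EL φ N ν (Function.update r j t) i) +
        (∑ i ∈ Icc (-K + 1) K, Ea φ (Function.update r j t) i) +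
        (∑ i ∈ Icc (K + 1) (N + 1), EL φ N ν (Function.update r j t) i)) from rfl,
    htot.deriv]
  simp only [Finset.sum_add_distrib, Finset.sum_ite_eq', Finset.mem_Icc]
  have hνne : (ν j : ℝ) ≠ 0 := by
    have := hν0 j (Finset.mem_Icc.mpr ⟨hj.1, hj.2⟩)
    exact_mod_cast (by omega : ν j ≠ 0)
  rw [show r (j - 1) + r j = r j + r (j - 1) from add_comm _ _,
    show r (j + 1) + r j = r j + r (j + 1) from add_comm _ _]
  simp only [bbQ, ccQ]
  simp only [show (-N ≤ j ∧ j ≤ -K) ↔ j ≤ -K from by omega,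
    show (-N ≤ j + 1 ∧ j + 1 ≤ -K) ↔ j ≤ -K - 1 from by omega,
    show (-K + 1 ≤ j - 1 ∧ j - 1 ≤ K) ↔ (-K + 2 ≤ j ∧ j ≤ K + 1) from by omega,
    show (-K + 1 ≤ j + 1 ∧ j + 1 ≤ K) ↔ (-K ≤ j ∧ j ≤ K - 1) from by omega,
    show (-K + 1 ≤ j + 2 ∧ j + 2 ≤ K) ↔ (-K - 1 ≤ j ∧ j ≤ K - 2) from by omega,
    show (K + 1 ≤ j ∧ j ≤ N + 1) ↔ K + 1 ≤ j from by omega,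
    show (K + 1 ≤ j + 1 ∧ j + 1 ≤ N + 1) ↔ K ≤ j from by omega,
    show (-K - 1 ≤ j - 1 ∧ j - 1 ≤ K - 2) ↔ (-K ≤ j ∧ j ≤ K - 1) from by omega]
  rw [neg_mul, neg_inj, inv_mul_eq_iff_eq_mul₀ hνne]
  split_ifs <;>
    first
      | (exfalso; omega)
      | (rw [hν1 j (Finset.mem_Icc.mpr ⟨by omega, by omega⟩)]; push_cast; ring)
      | (push_cast; ring)

/-! ### Core contraction estimate -/

set_option maxHeartbeats 1600000 in
lemma aux_core {f : ℝ → ℝ} (hf : ContDiffOn ℝ 3 f (Set.Ioi 0)) (t1 t2 rL rU : ℝ)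
    (ht1 : 0 < t1) (ht12 : t1 < t2)
    (hf2neg : ∀ x : ℝ, t1 < x → deriv (deriv f) x < 0)
    (hf3neg : ∀ x : ℝ, 0 < x → x < t2 → deriv (deriv (deriv f)) x < 0)
    (hf3pos : ∀ x : ℝ, t2 < x → 0 < deriv (deriv (deriv f)) x)
    (hrL : t2 / 2 < rL) (hrLU : rL < rU)
    (hstab : 0 < deriv (deriv f) rU + 21 * deriv (deriv f) (2 * rL))
    (K N : ℤ) (hK : 2 ≤ K) (hN : K + 2 ≤ N) (nu : ℤ → ℤ)
    (hnu0 : ∀ j ∈ Icc (-N) N, 1 ≤ nu j) (hnu1 : ∀ j ∈ Icc (-K - 1) (K + 1), nu j = 1)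
    (rp sp rn sn : ℤ → ℝ)
    (hrp : ∀ i ∈ Icc (-N) N, rp i ∈ Set.Ioo rL rU)
    (hsp : ∀ i ∈ Icc (-N) N, sp i ∈ Set.Ioo rL rU)
    (hrn : ∀ i ∈ Icc (-N) N, rn i ∈ Set.Ioo rL rU)
    (hsn : ∀ i ∈ Icc (-N) N, sn i ∈ Set.Ioo rL rU)
    (M : ℝ) (hM : ∀ i ∈ Icc (-N) N, |rp i - sp i| ≤ M)
    (j : ℤ) (hjm : j ∈ Icc (-N) N)
    (hmax : ∀ i ∈ Icc (-N) N, |rn i - sn i| ≤ rn j - sn j)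
    (heq : psiQCE f N K nu rn j - psiQCE f N K nu sn j
      = psiG f N K nu sp j - psiG f N K nu rp j) :
    (deriv (deriv f) rU - 5 * |deriv (deriv f) (2 * rL)|) * (rn j - sn j)
      ≤ 16 * |deriv (deriv f) (2 * rL)| * M := by
  have hj := Finset.mem_Icc.mp hjm
  have ht2 : 0 < t2 := lt_trans ht1 ht12
  have hrLpos : 0 < rL := by linarith
  have hgg : deriv (deriv f) (2 * rL) < 0 := hf2neg _ (by linarith)
  have hAeq : |deriv (deriv f) (2 * rL)| = -deriv (deriv f) (2 * rL) := abs_of_neg hgg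
  set A := |deriv (deriv f) (2 * rL)| with hAdef
  set c2 := deriv (deriv f) rU with hc2def
  have hApos : 0 < A := by rw [hAeq]; linarith
  have hc2A : 21 * A < c2 := by rw [hAeq]; rw [hc2def]; linarith
  have hc2pos : 0 < c2 := by linarith
  have hrU : rU ≤ t1 := by
    by_contra hcon
    have h := hf2neg rU (by linarith)
    rw [← hc2def] at h
    linarith
  -- regularity of the derivatives
  have hC2 : ContDiffOn ℝ 2 (deriv f) (Set.Ioi 0) :=
    hf.deriv_of_isOpen isOpen_Ioi (by norm_num)
  have hC1 : ContDiffOn ℝ 1 (deriv (deriv f)) (Set.Ioi 0) :=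
    hC2.deriv_of_isOpen isOpen_Ioi (by norm_num)
  have hd2 : ∀ x : ℝ, 0 < x → DifferentiableAt ℝ (deriv f) x := fun x hx =>
    (hC2.differentiableOn (by norm_num)).differentiableAt (isOpen_Ioi.mem_nhds hx)
  have hcont2 : ContinuousOn (deriv (deriv f)) (Set.Ioi 0) := hC1.continuousOn
  -- monotonicity facts for f''
  have hsub1 : Set.Icc rL rU ⊆ Set.Ioi 0 := fun x hx => lt_of_lt_of_le hrLpos hx.1
  have hanti : StrictAntiOn (deriv (deriv f)) (Set.Icc rL rU) := by
    apply strictAntiOn_of_deriv_neg (convex_Icc _ _) (hcont2.mono hsub1)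
    intro x hx
    rw [interior_Icc] at hx
    exact hf3neg x (by linarith [hx.1]) (by linarith [hx.2])
  have F1 : ∀ x ∈ Set.Icc rL rU, c2 ≤ deriv (deriv f) x := by
    intro x hx
    rcases eq_or_lt_of_le hx.2 with h | h
    · rw [hc2def, h]
    · exact le_of_lt (hanti hx (Set.right_mem_Icc.mpr hrLU.le) h)
  have hsub2 : Set.Icc (2 * rL) (2 * rU) ⊆ Set.Ioi 0 := fun x hx =>
    lt_of_lt_of_le (by linarith) hx.1
  have hmono : StrictMonoOn (deriv (deriv f)) (Set.Icc (2 * rL) (2 * rU)) := by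
    apply strictMonoOn_of_deriv_pos (convex_Icc _ _) (hcont2.mono hsub2)
    intro x hx
    rw [interior_Icc] at hx
    exact hf3pos x (by linarith [hx.1])
  have F2 : ∀ x ∈ Set.Icc (2 * rL) (2 * rU), |deriv (deriv f) x| ≤ A := by
    intro x hx
    have hneg : deriv (deriv f) x < 0 := hf2neg x (by linarith [hx.1])
    have hge : deriv (deriv f) (2 * rL) ≤ deriv (deriv f) x := by
      rcases eq_or_lt_of_le hx.1 with h | h
      · rw [← h]
      · exact le_of_lt (hmono (Set.left_mem_Icc.mpr (by linarith)) hx h)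
    rw [abs_of_neg hneg, hAeq]
    linarith
  -- Lipschitz bound for f' on [2rL, 2rU]
  have LIP : ∀ x ∈ Set.Icc (2 * rL) (2 * rU), ∀ y ∈ Set.Icc (2 * rL) (2 * rU),
      |deriv f x - deriv f y| ≤ A * |x - y| := by
    intro x hx y hy
    have h := Convex.norm_image_sub_le_of_norm_deriv_le
      (fun z hz => hd2 z (hsub2 hz))
      (fun z hz => by rw [Real.norm_eq_abs]; exact F2 z hz)
      (convex_Icc _ _) hy hx
    simpa [Real.norm_eq_abs] using h
  -- lower MVT bound for f' on [rL, rU]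
  have LOW : ∀ x ∈ Set.Icc rL rU, ∀ y ∈ Set.Icc rL rU, x ≤ y →
      c2 * (y - x) ≤ deriv f y - deriv f x := by
    intro x hx y hy hxy
    exact (convex_Icc rL rU).mul_sub_le_image_sub_of_le_deriv
      (hC2.continuousOn.mono hsub1)
      (fun z hz => (hd2 z (hsub1 (interior_subset hz))).differentiableWithinAt)
      (fun z hz => F1 z (interior_subset hz)) x hx y hy hxy
  -- index bookkeeping
  have hmem : ∀ i : ℤ, -N ≤ i → i ≤ N → i ∈ Icc (-N) N := fun i u v =>
    Finset.mem_Icc.mpr ⟨u, v⟩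
  have hM0 : 0 ≤ M := le_trans (abs_nonneg _) (hM 0 (hmem 0 (by omega) (by omega)))
  have hD0 : 0 ≤ rn j - sn j := le_trans (abs_nonneg _) (hmax j hjm)
  -- coordinatewise bounds
  have hbnd : ∀ (x : ℤ → ℝ), (∀ i ∈ Icc (-N) N, x i ∈ Set.Ioo rL rU) →
      ∀ i : ℤ, -N ≤ i → i ≤ N → rL ≤ x i ∧ x i ≤ rU := fun x hx i u v =>
    ⟨(hx i (hmem i u v)).1.le, (hx i (hmem i u v)).2.le⟩
  have hposr : ∀ (x : ℤ → ℝ), (∀ i ∈ Icc (-N) N, x i ∈ Set.Ioo rL rU) →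
      ∀ i ∈ Icc (-N) N, 0 < x i := fun x hx i hi => lt_trans hrLpos (hx i hi).1
  -- Lipschitz bounds for the relevant pair terms
  have pair : ∀ (x y : ℤ → ℝ), (∀ i ∈ Icc (-N) N, x i ∈ Set.Ioo rL rU) →
      (∀ i ∈ Icc (-N) N, y i ∈ Set.Ioo rL rU) → ∀ (B : ℝ),
      (∀ i ∈ Icc (-N) N, |x i - y i| ≤ B) →
      ∀ i i' : ℤ, -N ≤ i → i ≤ N → -N ≤ i' → i' ≤ N →
      |deriv f (x i + x i') - deriv f (y i + y i')| ≤ 2 * (A * B) := by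
    intro x y hx hy B hB i i' u v u' v'
    have ha := hbnd x hx i u v
    have hb := hbnd x hx i' u' v'
    have hc := hbnd y hy i u v
    have hd := hbnd y hy i' u' v'
    have h5 := LIP (x i + x i') (Set.mem_Icc.mpr ⟨by linarith [ha.1, hb.1], by linarith [ha.2, hb.2]⟩)
      (y i + y i') (Set.mem_Icc.mpr ⟨by linarith [hc.1, hd.1], by linarith [hc.2, hd.2]⟩)
    have h6 : |x i + x i' - (y i + y i')| ≤ 2 * B := by
      have h7 := hB i (hmem i u v)
      have h8 := hB i' (hmem i' u' v')
      calc |x i + x i' - (y i + y i')| = |(x i - y i) + (x i' - y i')| := by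
            rw [show x i + x i' - (y i + y i') = (x i - y i) + (x i' - y i') from by ring]
        _ ≤ |x i - y i| + |x i' - y i'| := abs_add_le _ _
        _ ≤ 2 * B := by linarith
    calc |deriv f (x i + x i') - deriv f (y i + y i')|
        ≤ A * |x i + x i' - (y i + y i')| := h5
      _ ≤ A * (2 * B) := mul_le_mul_of_nonneg_left h6 hApos.le
      _ = 2 * (A * B) := by ring
  have doub : ∀ (x y : ℤ → ℝ), (∀ i ∈ Icc (-N) N, x i ∈ Set.Ioo rL rU) →
      (∀ i ∈ Icc (-N) N, y i ∈ Set.Ioo rL rU) → ∀ (B : ℝ),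
      (∀ i ∈ Icc (-N) N, |x i - y i| ≤ B) →
      ∀ i : ℤ, -N ≤ i → i ≤ N →
      |deriv f (2 * x i) - deriv f (2 * y i)| ≤ 2 * (A * B) := by
    intro x y hx hy B hB i u v
    have ha := hbnd x hx i u v
    have hc := hbnd y hy i u v
    have h5 := LIP (2 * x i) (Set.mem_Icc.mpr ⟨by linarith [ha.1], by linarith [ha.2]⟩)
      (2 * y i) (Set.mem_Icc.mpr ⟨by linarith [hc.1], by linarith [hc.2]⟩)
    have h6 : |2 * x i - 2 * y i| ≤ 2 * B := by
      have h7 := hB i (hmem i u v)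
      calc |2 * x i - 2 * y i| = 2 * |x i - y i| := by
            rw [show 2 * x i - 2 * y i = 2 * (x i - y i) from by ring, abs_mul]
            norm_num
        _ ≤ 2 * B := by linarith
    calc |deriv f (2 * x i) - deriv f (2 * y i)| ≤ A * |2 * x i - 2 * y i| := h5
      _ ≤ A * (2 * B) := mul_le_mul_of_nonneg_left h6 hApos.le
      _ = 2 * (A * B) := by ring
  have pairN := pair rn sn hrn hsn (rn j - sn j) hmax
  have doubN := doub rn sn hrn hsn (rn j - sn j) hmax
  have pairP := pair rp sp hrp hsp M hM
  have doubP := doub rp sp hrp hsp M hM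
  -- the explicit formulas
  have Frn := psiQCE_formula hf N K hK hN nu hnu1 hnu0 rn (hposr rn hrn) j hjm
  have Fsn := psiQCE_formula hf N K hK hN nu hnu1 hnu0 sn (hposr sn hsn) j hjm
  -- Estimate (i): coercivity of the difference of the ψ^QCE at the maximizing index
  have E1 : (c2 - 5 * A) * (rn j - sn j)
      ≤ -(psiQCE f N K nu rn j - psiQCE f N K nu sn j) := by
    rw [Frn, Fsn]
    have t0 : c2 * (rn j - sn j) ≤ deriv f (rn j) - deriv f (sn j) := by
      have hb1 := hbnd sn hsn j hj.1 hj.2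
      have hb2 := hbnd rn hrn j hj.1 hj.2
      exact LOW (sn j) (Set.mem_Icc.mpr ⟨hb1.1, hb1.2⟩)
        (rn j) (Set.mem_Icc.mpr ⟨hb2.1, hb2.2⟩) (by linarith)
    have t1 : -(bbQ K j * (2 * (A * (rn j - sn j)))) ≤
        bbQ K j * (deriv f (2 * rn j) - deriv f (2 * sn j)) := by
      have h := (abs_le.mp (doubN j hj.1 hj.2)).1
      nlinarith [bbQ_nonneg K j]
    have t2 : -(ccQ K j * (2 * (A * (rn j - sn j)))) ≤
        ccQ K j * (deriv f (rn j + rn (j + 1)) - deriv f (sn j + sn (j + 1))) := by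
      by_cases hz : ccQ K j = 0
      · rw [hz]; norm_num
      · have hrange := ccQ_ne K j hz
        have h := (abs_le.mp (pairN j (j + 1) hj.1 hj.2 (by omega) (by omega))).1
        nlinarith [ccQ_nonneg K j]
    have t3 : -(ccQ K (j - 1) * (2 * (A * (rn j - sn j)))) ≤
        ccQ K (j - 1) * (deriv f (rn j + rn (j - 1)) - deriv f (sn j + sn (j - 1))) := by
      by_cases hz : ccQ K (j - 1) = 0
      · rw [hz]; norm_num
      · have hrange := ccQ_ne K (j - 1) hz
        have h := (abs_le.mp (pairN j (j - 1) hj.1 hj.2 (by omega) (by omega))).1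
        nlinarith [ccQ_nonneg K (j - 1)]
    have hprod : 0 ≤ (5 / 2 - (bbQ K j + ccQ K j + ccQ K (j - 1))) * (A * (rn j - sn j)) :=
      mul_nonneg (by linarith [bbcc_le K hK j]) (mul_nonneg hApos.le hD0)
    linarith [t0, t1, t2, t3, hprod]
  -- Estimate (ii): bound on the ghost-force difference
  have Frp := psiQCE_formula hf N K hK hN nu hnu1 hnu0 rp (hposr rp hrp) j hjm
  have Fsp := psiQCE_formula hf N K hK hN nu hnu1 hnu0 sp (hposr sp hsp) j hjm
  have hAM : 0 ≤ A * M := mul_nonneg hApos.le hM0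
  have E2 : |psiG f N K nu rp j - psiG f N K nu sp j| ≤ 16 * (A * M) := by
    simp only [psiG, psiQCF, Ifun, Frp, Fsp]
    rcases (by omega : j ≤ -K - 2 ∨ j = -K - 1 ∨ j = -K ∨ j = -K + 1 ∨
        (-K + 2 ≤ j ∧ j ≤ K - 2) ∨ j = K - 1 ∨ j = K ∨ j = K + 1 ∨ K + 2 ≤ j) with
      hr0 | hr0 | hr0 | hr0 | hr0 | hr0 | hr0 | hr0 | hr0
    · -- region j ≤ -K - 2 : ghost force vanishes
      have hbb : bbQ K j = 2 := by
        unfold bbQ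
        rw [if_pos (by omega : j ≤ -K), if_pos (by omega : j ≤ -K - 1),
          if_neg (by omega : ¬ K + 1 ≤ j), if_neg (by omega : ¬ K ≤ j)]
        norm_num
      have hcc : ccQ K j = 0 := by
        unfold ccQ
        rw [if_neg (by omega : ¬ (-K + 1 ≤ j ∧ j ≤ K)),
          if_neg (by omega : ¬ (-K - 1 ≤ j ∧ j ≤ K - 2))]
        norm_num
      have hcc2 : ccQ K (j - 1) = 0 := by
        unfold ccQ
        rw [if_neg (by omega : ¬ (-K + 1 ≤ j - 1 ∧ j - 1 ≤ K)),
          if_neg (by omega : ¬ (-K - 1 ≤ j - 1 ∧ j - 1 ≤ K - 2))]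
        norm_num
      simp only [if_pos (show j ≤ -K by omega), hbb, hcc, hcc2]
      rw [abs_le]
      constructor <;> nlinarith [hAM]
    · -- region j = -K - 1
      subst hr0
      have hbb : bbQ K (-K - 1) = 2 := by
        unfold bbQ
        rw [if_pos (by omega : (-K - 1 : ℤ) ≤ -K), if_pos (by omega : (-K - 1 : ℤ) ≤ -K - 1),
          if_neg (by omega : ¬ K + 1 ≤ -K - 1), if_neg (by omega : ¬ K ≤ -K - 1)]
        norm_num
      have hcc : ccQ K (-K - 1) = 1 / 2 := by
        unfold ccQ
        rw [if_neg (by omega : ¬ (-K + 1 ≤ -K - 1 ∧ -K - 1 ≤ K)),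
          if_pos (by omega : (-K - 1 ≤ -K - 1 ∧ -K - 1 ≤ K - 2))]
        norm_num
      have hcc2 : ccQ K (-K - 1 - 1) = 0 := by
        unfold ccQ
        rw [if_neg (by omega : ¬ (-K + 1 ≤ -K - 1 - 1 ∧ -K - 1 - 1 ≤ K)),
          if_neg (by omega : ¬ (-K - 1 ≤ -K - 1 - 1 ∧ -K - 1 - 1 ≤ K - 2))]
        norm_num
      simp only [show (-K - 1 + 1 : ℤ) = -K from by ring]
      simp only [if_pos (show (-K - 1 : ℤ) ≤ -K by omega), hbb, hcc, hcc2]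
      have B1 := abs_le.mp (pairP (-K - 1) (-K) (by omega) (by omega) (by omega) (by omega))
      rw [abs_le]
      constructor <;> linarith [B1.1, B1.2, hAM]
    · -- region j = -K
      subst hr0
      have hbb : bbQ K (-K) = 1 := by
        unfold bbQ
        rw [if_pos (by omega : (-K : ℤ) ≤ -K), if_neg (by omega : ¬ (-K : ℤ) ≤ -K - 1),
          if_neg (by omega : ¬ K + 1 ≤ -K), if_neg (by omega : ¬ K ≤ -K)]
        norm_num
      have hcc : ccQ K (-K) = 1 / 2 := by
        unfold ccQ
        rw [if_neg (by omega : ¬ (-K + 1 ≤ -K ∧ -K ≤ K)),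
          if_pos (by omega : (-K - 1 ≤ -K ∧ -K ≤ K - 2))]
        norm_num
      have hcc2 : ccQ K (-K - 1) = 1 / 2 := by
        unfold ccQ
        rw [if_neg (by omega : ¬ (-K + 1 ≤ -K - 1 ∧ -K - 1 ≤ K)),
          if_pos (by omega : (-K - 1 ≤ -K - 1 ∧ -K - 1 ≤ K - 2))]
        norm_num
      simp only [if_pos (show (-K : ℤ) ≤ -K by omega), hbb, hcc, hcc2]
      have B1 := abs_le.mp (doubP (-K) (by omega) (by omega))
      have B2 := abs_le.mp (pairP (-K) (-K + 1) (by omega) (by omega) (by omega) (by omega))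
      have B3 := abs_le.mp (pairP (-K) (-K - 1) (by omega) (by omega) (by omega) (by omega))
      rw [abs_le]
      constructor <;> linarith [B1.1, B1.2, B2.1, B2.2, B3.1, B3.2, hAM]
    · -- region j = -K + 1
      subst hr0
      have hbb : bbQ K (-K + 1) = 0 := by
        unfold bbQ
        rw [if_neg (by omega : ¬ (-K + 1 : ℤ) ≤ -K), if_neg (by omega : ¬ (-K + 1 : ℤ) ≤ -K - 1),
          if_neg (by omega : ¬ K + 1 ≤ -K + 1), if_neg (by omega : ¬ K ≤ -K + 1)]
        norm_num
      have hcc : ccQ K (-K + 1) = 1 := by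
        unfold ccQ
        rw [if_pos (by omega : (-K + 1 ≤ -K + 1 ∧ -K + 1 ≤ K)),
          if_pos (by omega : (-K - 1 ≤ -K + 1 ∧ -K + 1 ≤ K - 2))]
        norm_num
      have hcc2 : ccQ K (-K) = 1 / 2 := by
        unfold ccQ
        rw [if_neg (by omega : ¬ (-K + 1 ≤ -K ∧ -K ≤ K)),
          if_pos (by omega : (-K - 1 ≤ -K ∧ -K ≤ K - 2))]
        norm_num
      simp only [show (-K + 1 - 1 : ℤ) = -K from by ring]
      simp only [if_neg (show ¬ (-K + 1 : ℤ) ≤ -K by omega),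
        if_pos (show (-K + 1 : ℤ) ≤ K by omega), hbb, hcc, hcc2]
      have B1 := abs_le.mp (pairP (-K + 1) (-K) (by omega) (by omega) (by omega) (by omega))
      have B2 := abs_le.mp (doubP (-K) (by omega) (by omega))
      have B3 := abs_le.mp (pairP (-K) (-K - 1) (by omega) (by omega) (by omega) (by omega))
      have B4 := abs_le.mp (pairP (-K) (-K + 1) (by omega) (by omega) (by omega) (by omega))
      rw [abs_le]
      constructor <;> linarith [B1.1, B1.2, B2.1, B2.2, B3.1, B3.2, B4.1, B4.2, hAM]
    · -- region -K + 2 ≤ j ≤ K - 2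
      have hbb : bbQ K j = 0 := by
        unfold bbQ
        rw [if_neg (by omega : ¬ j ≤ -K), if_neg (by omega : ¬ j ≤ -K - 1),
          if_neg (by omega : ¬ K + 1 ≤ j), if_neg (by omega : ¬ K ≤ j)]
        norm_num
      have hcc : ccQ K j = 1 := by
        unfold ccQ
        rw [if_pos (by omega : (-K + 1 ≤ j ∧ j ≤ K)),
          if_pos (by omega : (-K - 1 ≤ j ∧ j ≤ K - 2))]
        norm_num
      have hcc2 : ccQ K (j - 1) = 1 := by
        unfold ccQ
        rw [if_pos (by omega : (-K + 1 ≤ j - 1 ∧ j - 1 ≤ K)),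
          if_pos (by omega : (-K - 1 ≤ j - 1 ∧ j - 1 ≤ K - 2))]
        norm_num
      simp only [if_neg (show ¬ j ≤ -K by omega), if_pos (show j ≤ K by omega),
        hbb, hcc, hcc2]
      have B2 := abs_le.mp (doubP (-K) (by omega) (by omega))
      have B3 := abs_le.mp (pairP (-K) (-K - 1) (by omega) (by omega) (by omega) (by omega))
      have B4 := abs_le.mp (pairP (-K) (-K + 1) (by omega) (by omega) (by omega) (by omega))
      rw [abs_le]
      constructor <;> linarith [B2.1, B2.2, B3.1, B3.2, B4.1, B4.2, hAM]
    · -- region j = K - 1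
      subst hr0
      have hbb : bbQ K (K - 1) = 0 := by
        unfold bbQ
        rw [if_neg (by omega : ¬ (K - 1 : ℤ) ≤ -K), if_neg (by omega : ¬ (K - 1 : ℤ) ≤ -K - 1),
          if_neg (by omega : ¬ K + 1 ≤ K - 1), if_neg (by omega : ¬ K ≤ K - 1)]
        norm_num
      have hcc : ccQ K (K - 1) = 1 / 2 := by
        unfold ccQ
        rw [if_pos (by omega : (-K + 1 ≤ K - 1 ∧ K - 1 ≤ K)),
          if_neg (by omega : ¬ (-K - 1 ≤ K - 1 ∧ K - 1 ≤ K - 2))]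
        norm_num
      have hcc2 : ccQ K (K - 1 - 1) = 1 := by
        unfold ccQ
        rw [if_pos (by omega : (-K + 1 ≤ K - 1 - 1 ∧ K - 1 - 1 ≤ K)),
          if_pos (by omega : (-K - 1 ≤ K - 1 - 1 ∧ K - 1 - 1 ≤ K - 2))]
        norm_num
      simp only [show (K - 1 + 1 : ℤ) = K from by ring]
      simp only [if_neg (show ¬ (K - 1 : ℤ) ≤ -K by omega),
        if_pos (show (K - 1 : ℤ) ≤ K by omega), hbb, hcc, hcc2]
      have B1 := abs_le.mp (pairP (K - 1) K (by omega) (by omega) (by omega) (by omega))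
      have B2 := abs_le.mp (doubP (-K) (by omega) (by omega))
      have B3 := abs_le.mp (pairP (-K) (-K - 1) (by omega) (by omega) (by omega) (by omega))
      have B4 := abs_le.mp (pairP (-K) (-K + 1) (by omega) (by omega) (by omega) (by omega))
      rw [abs_le]
      constructor <;> linarith [B1.1, B1.2, B2.1, B2.2, B3.1, B3.2, B4.1, B4.2, hAM]
    · -- region j = K
      simp only [hr0]
      have hbb : bbQ K K = 1 := by
        unfold bbQ
        rw [if_neg (by omega : ¬ (K : ℤ) ≤ -K), if_neg (by omega : ¬ (K : ℤ) ≤ -K - 1),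
          if_neg (by omega : ¬ K + 1 ≤ K), if_pos (le_refl K)]
        norm_num
      have hcc : ccQ K K = 1 / 2 := by
        unfold ccQ
        rw [if_pos (by omega : (-K + 1 ≤ K ∧ K ≤ K)),
          if_neg (by omega : ¬ (-K - 1 ≤ K ∧ K ≤ K - 2))]
        norm_num
      have hcc2 : ccQ K (K - 1) = 1 / 2 := by
        unfold ccQ
        rw [if_pos (by omega : (-K + 1 ≤ K - 1 ∧ K - 1 ≤ K)),
          if_neg (by omega : ¬ (-K - 1 ≤ K - 1 ∧ K - 1 ≤ K - 2))]
        norm_num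
      simp only [if_neg (show ¬ (K : ℤ) ≤ -K by omega), if_pos (le_refl K), hbb, hcc, hcc2]
      have B0 := abs_le.mp (doubP K (by omega) (by omega))
      have B1 := abs_le.mp (pairP K (K + 1) (by omega) (by omega) (by omega) (by omega))
      have B5 := abs_le.mp (pairP K (K - 1) (by omega) (by omega) (by omega) (by omega))
      have B2 := abs_le.mp (doubP (-K) (by omega) (by omega))
      have B3 := abs_le.mp (pairP (-K) (-K - 1) (by omega) (by omega) (by omega) (by omega))
      have B4 := abs_le.mp (pairP (-K) (-K + 1) (by omega) (by omega) (by omega) (by omega))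
      rw [abs_le]
      constructor <;>
        linarith [B0.1, B0.2, B1.1, B1.2, B5.1, B5.2, B2.1, B2.2, B3.1, B3.2, B4.1, B4.2, hAM]
    · -- region j = K + 1
      subst hr0
      have hbb : bbQ K (K + 1) = 2 := by
        unfold bbQ
        rw [if_neg (by omega : ¬ (K + 1 : ℤ) ≤ -K), if_neg (by omega : ¬ (K + 1 : ℤ) ≤ -K - 1),
          if_pos (le_refl (K + 1)), if_pos (by omega : K ≤ K + 1)]
        norm_num
      have hcc : ccQ K (K + 1) = 0 := by
        unfold ccQ
        rw [if_neg (by omega : ¬ (-K + 1 ≤ K + 1 ∧ K + 1 ≤ K)),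
          if_neg (by omega : ¬ (-K - 1 ≤ K + 1 ∧ K + 1 ≤ K - 2))]
        norm_num
      have hcc2 : ccQ K K = 1 / 2 := by
        unfold ccQ
        rw [if_pos (by omega : (-K + 1 ≤ K ∧ K ≤ K)),
          if_neg (by omega : ¬ (-K - 1 ≤ K ∧ K ≤ K - 2))]
        norm_num
      simp only [show (K + 1 - 1 : ℤ) = K from by ring]
      simp only [if_neg (show ¬ (K + 1 : ℤ) ≤ -K by omega),
        if_neg (show ¬ (K + 1 : ℤ) ≤ K by omega), hbb, hcc, hcc2]
      rw [show rp (K + 1) + rp K = rp K + rp (K + 1) from add_comm _ _,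
        show sp (K + 1) + sp K = sp K + sp (K + 1) from add_comm _ _]
      have B0 := abs_le.mp (doubP K (by omega) (by omega))
      have B1 := abs_le.mp (pairP K (K + 1) (by omega) (by omega) (by omega) (by omega))
      have B5 := abs_le.mp (pairP K (K - 1) (by omega) (by omega) (by omega) (by omega))
      have B2 := abs_le.mp (doubP (-K) (by omega) (by omega))
      have B3 := abs_le.mp (pairP (-K) (-K - 1) (by omega) (by omega) (by omega) (by omega))
      have B4 := abs_le.mp (pairP (-K) (-K + 1) (by omega) (by omega) (by omega) (by omega))
      rw [abs_le]
      constructor <;>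
        linarith [B0.1, B0.2, B1.1, B1.2, B5.1, B5.2, B2.1, B2.2, B3.1, B3.2, B4.1, B4.2, hAM]
    · -- region K + 2 ≤ j
      have hbb : bbQ K j = 2 := by
        unfold bbQ
        rw [if_neg (by omega : ¬ j ≤ -K), if_neg (by omega : ¬ j ≤ -K - 1),
          if_pos (by omega : K + 1 ≤ j), if_pos (by omega : K ≤ j)]
        norm_num
      have hcc : ccQ K j = 0 := by
        unfold ccQ
        rw [if_neg (by omega : ¬ (-K + 1 ≤ j ∧ j ≤ K)),
          if_neg (by omega : ¬ (-K - 1 ≤ j ∧ j ≤ K - 2))]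
        norm_num
      have hcc2 : ccQ K (j - 1) = 0 := by
        unfold ccQ
        rw [if_neg (by omega : ¬ (-K + 1 ≤ j - 1 ∧ j - 1 ≤ K)),
          if_neg (by omega : ¬ (-K - 1 ≤ j - 1 ∧ j - 1 ≤ K - 2))]
        norm_num
      simp only [if_neg (show ¬ j ≤ -K by omega), if_neg (show ¬ j ≤ K by omega),
        hbb, hcc, hcc2]
      have B0 := abs_le.mp (doubP K (by omega) (by omega))
      have B1 := abs_le.mp (pairP K (K + 1) (by omega) (by omega) (by omega) (by omega))
      have B5 := abs_le.mp (pairP K (K - 1) (by omega) (by omega) (by omega) (by omega))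
      have B2 := abs_le.mp (doubP (-K) (by omega) (by omega))
      have B3 := abs_le.mp (pairP (-K) (-K - 1) (by omega) (by omega) (by omega) (by omega))
      have B4 := abs_le.mp (pairP (-K) (-K + 1) (by omega) (by omega) (by omega) (by omega))
      rw [abs_le]
      constructor <;>
        linarith [B0.1, B0.2, B1.1, B1.2, B5.1, B5.2, B2.1, B2.2, B3.1, B3.2, B4.1, B4.2, hAM]
  have hfin : psiG f N K nu rp j - psiG f N K nu sp j ≤ 16 * (A * M) :=
    le_trans (le_abs_self _) E2
  calc (c2 - 5 * A) * (rn j - sn j)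
      ≤ -(psiQCE f N K nu rn j - psiQCE f N K nu sn j) := E1
    _ = psiG f N K nu rp j - psiG f N K nu sp j := by rw [heq]; ring
    _ ≤ 16 * (A * M) := hfin
    _ = 16 * A * M := by ring

/-- The iteration map induced by the preconditioned equations is a contraction on
`Ω = (r_L, r_U)^{2N+1}` in the maximum norm: if `r^p ↦ r^{p+1}` and `s^p ↦ s^{p+1}`,
then `‖r^{p+1} − s^{p+1}‖_∞ ≤ α ‖r^p − s^p‖_∞` where
`α = 16|φ''(2r_L)| / (φ''(r_U) − 5|φ''(2r_L)|) < 1`. -/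
theorem stmt_1 (φ W : ℝ → ℝ) (a₀ rt₁ rt₂ Dt : ℝ)
    (hφC3 : ContDiffOn ℝ 3 φ (Set.Ioi 0))
    (ha₀ : 0 < a₀) (h₁ : a₀ < rt₁) (h₂ : rt₁ < rt₂) (h₃ : rt₂ < 2 * a₀)
    (hmin : ∀ r : ℝ, 0 < r → φ a₀ + φ (2 * a₀) ≤ φ r + φ (2 * r))
    (hφ''pos : ∀ r : ℝ, 0 < r → r < rt₁ → 0 < deriv (deriv φ) r)
    (hφ''neg : ∀ r : ℝ, rt₁ < r → deriv (deriv φ) r < 0)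
    (hφ'''neg : ∀ r : ℝ, 0 < r → r < rt₂ → deriv (deriv (deriv φ)) r < 0)
    (hφ'''pos : ∀ r : ℝ, rt₂ < r → 0 < deriv (deriv (deriv φ)) r)
    (hW : W = fun D => (φ (D * a₀) + φ (2 * D * a₀)) / a₀)
    (hDt : 1 < Dt)
    (hW'neg : ∀ D : ℝ, 0 < D → D < 1 → deriv W D < 0)
    (hW'pos : ∀ D : ℝ, 1 < D → 0 < deriv W D)
    (hW''pos : ∀ D : ℝ, 0 < D → D < Dt → 0 < deriv (deriv W) D)
    (hW''neg : ∀ D : ℝ, Dt < D → deriv (deriv W) D < 0)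
    (K N : ℤ) (hK : 2 ≤ K) (hN : K + 2 ≤ N)
    (ν : ℤ → ℤ) (hν : ∀ j ∈ Icc (-N) N, 1 ≤ ν j)
    (hν1 : ∀ j ∈ Icc (-K - 1) (K + 1), ν j = 1)
    (Φ : ℤ → ℝ) (rL rU : ℝ)
    (hrL : rt₂ / 2 < rL) (hrLU : rL < rU)
    (hstab : 0 < deriv (deriv φ) rU + 21 * deriv (deriv φ) (2 * rL))
    (hΦ : ∀ j ∈ Icc (-N) N,
      deriv φ rL + 6 * deriv φ (2 * rL) - 4 * deriv φ (2 * rU) < Φ j ∧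
      Φ j < deriv φ rU + 6 * deriv φ (2 * rU) - 4 * deriv φ (2 * rL))
    (rp sp rn sn : ℤ → ℝ)
    (hrp : ∀ j ∈ Icc (-N) N, rp j ∈ Set.Ioo rL rU)
    (hsp : ∀ j ∈ Icc (-N) N, sp j ∈ Set.Ioo rL rU)
    (hrn : ∀ j ∈ Icc (-N) N, rn j ∈ Set.Ioo rL rU)
    (hsn : ∀ j ∈ Icc (-N) N, sn j ∈ Set.Ioo rL rU)
    (hrn_eq : ∀ j ∈ Icc (-N) N, psiQCE φ N K ν rn j + psiG φ N K ν rp j + Φ j = 0)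
    (hsn_eq : ∀ j ∈ Icc (-N) N, psiQCE φ N K ν sn j + psiG φ N K ν sp j + Φ j = 0) :
    ((Icc (-N) N).sup' (Finset.nonempty_Icc.mpr (by omega)) fun j => |rn j - sn j|) ≤
      (16 * |deriv (deriv φ) (2 * rL)| /
        (deriv (deriv φ) rU - 5 * |deriv (deriv φ) (2 * rL)|)) *
      ((Icc (-N) N).sup' (Finset.nonempty_Icc.mpr (by omega)) fun j => |rp j - sp j|) ∧
    16 * |deriv (deriv φ) (2 * rL)| /
      (deriv (deriv φ) rU - 5 * |deriv (deriv φ) (2 * rL)|) < 1 := by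
  classical
  have hrt₁ : 0 < rt₁ := lt_trans ha₀ h₁
  have hrt₂ : 0 < rt₂ := lt_trans hrt₁ h₂
  have hgg : deriv (deriv φ) (2 * rL) < 0 := hφ''neg _ (by linarith)
  have hAeq : |deriv (deriv φ) (2 * rL)| = -deriv (deriv φ) (2 * rL) := abs_of_neg hgg
  have hApos : 0 < |deriv (deriv φ) (2 * rL)| := by rw [hAeq]; linarith
  have hden : 16 * |deriv (deriv φ) (2 * rL)| <
      deriv (deriv φ) rU - 5 * |deriv (deriv φ) (2 * rL)| := by rw [hAeq]; linarith
  have hdenpos : 0 < deriv (deriv φ) rU - 5 * |deriv (deriv φ) (2 * rL)| := by linarith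
  have hne : (Icc (-N) N).Nonempty := Finset.nonempty_Icc.mpr (by omega)
  constructor
  · obtain ⟨j₀, hj₀mem, hj₀⟩ := Finset.exists_mem_eq_sup' hne (fun j => |rn j - sn j|)
    have hMle : ∀ i ∈ Icc (-N) N, |rp i - sp i| ≤
        (Icc (-N) N).sup' hne (fun j => |rp j - sp j|) := fun i hi =>
      Finset.le_sup' (fun j => |rp j - sp j|) hi
    have hmax0 : ∀ i ∈ Icc (-N) N, |rn i - sn i| ≤ |rn j₀ - sn j₀| := fun i hi => by
      rw [← hj₀]; exact Finset.le_sup' (fun j => |rn j - sn j|) hi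
    have heq0 : psiQCE φ N K ν rn j₀ - psiQCE φ N K ν sn j₀
        = psiG φ N K ν sp j₀ - psiG φ N K ν rp j₀ := by
      have h1 := hrn_eq j₀ hj₀mem
      have h2 := hsn_eq j₀ hj₀mem
      linarith
    have key : |rn j₀ - sn j₀| ≤
        (16 * |deriv (deriv φ) (2 * rL)| /
          (deriv (deriv φ) rU - 5 * |deriv (deriv φ) (2 * rL)|)) *
        ((Icc (-N) N).sup' hne (fun j => |rp j - sp j|)) := by
      rw [div_mul_eq_mul_div, le_div_iff₀ hdenpos]
      rcases le_or_gt (sn j₀) (rn j₀) with hsign | hsign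
      · have habs : |rn j₀ - sn j₀| = rn j₀ - sn j₀ := abs_of_nonneg (by linarith)
        have hmax1 : ∀ i ∈ Icc (-N) N, |rn i - sn i| ≤ rn j₀ - sn j₀ := fun i hi => by
          rw [← habs]; exact hmax0 i hi
        have hcore := aux_core hφC3 rt₁ rt₂ rL rU hrt₁ h₂ hφ''neg hφ'''neg hφ'''pos
          hrL hrLU hstab K N hK hN ν hν hν1 rp sp rn sn hrp hsp hrn hsn
          ((Icc (-N) N).sup' hne (fun j => |rp j - sp j|)) hMle j₀ hj₀mem hmax1 heq0
        rw [habs]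
        linarith
      · have habs : |rn j₀ - sn j₀| = sn j₀ - rn j₀ := by
          rw [abs_sub_comm]; exact abs_of_nonneg (by linarith)
        have hmax1 : ∀ i ∈ Icc (-N) N, |sn i - rn i| ≤ sn j₀ - rn j₀ := fun i hi => by
          rw [abs_sub_comm, ← habs]; exact hmax0 i hi
        have hMle2 : ∀ i ∈ Icc (-N) N, |sp i - rp i| ≤
            (Icc (-N) N).sup' hne (fun j => |rp j - sp j|) := fun i hi => by
          rw [abs_sub_comm]; exact hMle i hi
        have heq02 : psiQCE φ N K ν sn j₀ - psiQCE φ N K ν rn j₀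
            = psiG φ N K ν rp j₀ - psiG φ N K ν sp j₀ := by linarith
        have hcore := aux_core hφC3 rt₁ rt₂ rL rU hrt₁ h₂ hφ''neg hφ'''neg hφ'''pos
          hrL hrLU hstab K N hK hN ν hν hν1 sp rp sn rn hsp hrp hsn hrn
          ((Icc (-N) N).sup' hne (fun j => |rp j - sp j|)) hMle2 j₀ hj₀mem hmax1 heq02
        rw [habs]
        linarith
    exact Finset.sup'_le _ _ (fun i hi => le_trans (hmax0 i hi) key)
  · rw [div_lt_one hdenpos]
    exact hden
end

section
/- The force-based quasicontinuum approximation is consistent: if r_j = r for all j = −N, …, N (a uniformly strained chain with spacing r > 0), then ψ^QCF_j(r, …, r) = −(φ'(r) + 2φ'(2r)) for every j = −N, …, N; in particular, ψ^QCF_j(r,…,r) has the same value for every representative atom j, regardless of whether j lies in the atomistic or continuum region. -/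
open Finset

/-- The force-based quasicontinuum approximation is consistent: on a uniformly strained
chain with spacing `r > 0`, `ψ^QCF_j(r, …, r) = −(φ'(r) + 2φ'(2r))` for every
`j = −N, …, N`, the same value in the atomistic and continuum regions. -/
theorem stmt_3 (φ : ℝ → ℝ) (hφC1 : ContDiffOn ℝ 1 φ (Set.Ioi 0))
    (K N : ℤ) (hK : 2 ≤ K) (hN : K + 2 ≤ N)
    (ν : ℤ → ℤ) (hν : ∀ j ∈ Icc (-N) N, 1 ≤ ν j)
    (hν1 : ∀ j ∈ Icc (-K - 1) (K + 1), ν j = 1)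
    (r : ℝ) (hr : 0 < r) :
    ∀ j ∈ Icc (-N) N,
      psiQCF φ K (fun _ => r) j = -(deriv φ r + 2 * deriv φ (2 * r)) := by
  intro j _
  have h2 : r + r = 2 * r := by ring
  simp only [psiQCF, Ifun, h2]
  split_ifs <;> ring
end

section
/- The conjugate atomistic force on a representative atom is the hat-function-weighted average of the atomistic forces: for j = −N+1, …, N, F^CQC_j(z) := −∂E^CQC(z)/∂z_j = Σ_{i=0}^{ν_{j−1}} ((ν_{j−1} − i)/ν_{j−1}) F^a_{ℓ_j − i}(y(z)) + Σ_{i=1}^{ν_j} ((ν_j − i)/ν_j) F^a_{ℓ_j + i}(y(z)), where F^a_i(y) := −∂E^a(y)/∂y_i = [φ'(y_{i+1} − y_i) + φ'(y_{i+2} − y_i)] − [φ'(y_i − y_{i−1}) + φ'(y_i − y_{i−2})], with terms φ'(y_i − y_k) understood to be zero whenever i or k lies outside {−M, …, M+1}. -/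
open Finset

/-- Piecewise linear "shape" (hat) function of representative atom `j`, evaluated at the
reference site of atom `i` (expressed in lattice units, knots at the `ℓ_j`). -/
noncomputable def hatS (ℓ : ℤ → ℤ) (j i : ℤ) : ℝ :=
  if ℓ (j - 1) ≤ i ∧ i ≤ ℓ j then
    ((i - ℓ (j - 1) : ℤ) : ℝ) / ((ℓ j - ℓ (j - 1) : ℤ) : ℝ)
  else if ℓ j ≤ i ∧ i ≤ ℓ (j + 1) then
    ((ℓ (j + 1) - i : ℤ) : ℝ) / ((ℓ (j + 1) - ℓ j : ℤ) : ℝ)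
  else 0

/-- Interpolated atom positions `y_i(z) = Σ_j S_j(x_i) z_j`. -/
noncomputable def yInterp (N : ℤ) (ℓ : ℤ → ℤ) (z : ℤ → ℝ) (i : ℤ) : ℝ :=
  ∑ j ∈ Icc (-N) (N + 1), hatS ℓ j i * z j

/-- The second-neighbor atomistic energy
`E^a(y) = Σ_{i=−M}^{M} φ(y_{i+1} − y_i) + Σ_{i=−M}^{M−1} φ(y_{i+2} − y_i)`. -/
noncomputable def Eatom (φ : ℝ → ℝ) (M : ℤ) (y : ℤ → ℝ) : ℝ :=
  (∑ i ∈ Icc (-M) M, φ (y (i + 1) - y i)) + ∑ i ∈ Icc (-M) (M - 1), φ (y (i + 2) - y i)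

/-- The constrained quasicontinuum energy `E^CQC(z) := E^a(y(z))`. -/
noncomputable def ECQC (φ : ℝ → ℝ) (M N : ℤ) (ℓ : ℤ → ℤ) (z : ℤ → ℝ) : ℝ :=
  Eatom φ M (yInterp N ℓ z)

/-- The conjugate force `F^CQC_j(z) := −∂E^CQC(z)/∂z_j`. -/
noncomputable def FCQC (φ : ℝ → ℝ) (M N : ℤ) (ℓ : ℤ → ℤ) (z : ℤ → ℝ) (j : ℤ) : ℝ :=
  -deriv (fun t => ECQC φ M N ℓ (Function.update z j t)) (z j)

/-- The atomistic force `F^a_i(y) := −∂E^a(y)/∂y_i`, with terms `φ'(y_i − y_k)` set to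
zero whenever `i` or `k` lies outside `{−M, …, M+1}`. -/
noncomputable def Fa (φ : ℝ → ℝ) (M : ℤ) (y : ℤ → ℝ) (i : ℤ) : ℝ :=
  ((if (-M ≤ i ∧ i ≤ M + 1) ∧ (-M ≤ i + 1 ∧ i + 1 ≤ M + 1) then
      deriv φ (y (i + 1) - y i) else 0) +
   (if (-M ≤ i ∧ i ≤ M + 1) ∧ (-M ≤ i + 2 ∧ i + 2 ≤ M + 1) then
      deriv φ (y (i + 2) - y i) else 0)) -
  ((if (-M ≤ i ∧ i ≤ M + 1) ∧ (-M ≤ i - 1 ∧ i - 1 ≤ M + 1) then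
      deriv φ (y i - y (i - 1)) else 0) +
   (if (-M ≤ i ∧ i ≤ M + 1) ∧ (-M ≤ i - 2 ∧ i - 2 ≤ M + 1) then
      deriv φ (y i - y (i - 2)) else 0))

lemma ell_lt (N : ℤ) (ℓ : ℤ → ℤ)
    (hℓmono : ∀ j : ℤ, -N - 1 ≤ j → j ≤ N + 1 → ℓ j < ℓ (j + 1)) :
    ∀ a b : ℤ, -N - 1 ≤ a → b ≤ N + 2 → a < b → ℓ a < ℓ b := by
  intro a b ha hb hab
  have H : ∀ b : ℤ, a + 1 ≤ b → (b ≤ N + 2 → ℓ a < ℓ b) := by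
    refine fun b hb' => Int.le_induction (motive := fun b _ => b ≤ N + 2 → ℓ a < ℓ b) ?_ ?_ b hb'
    · intro h; exact hℓmono a ha (by omega)
    · intro n hn ih h
      have h1 : ℓ a < ℓ n := ih (by omega)
      have h2 : ℓ n < ℓ (n + 1) := hℓmono n (by omega) (by omega)
      omega
  exact H b (by omega) hb

lemma yInterp_formula (N : ℤ) (ℓ : ℤ → ℤ) (z : ℤ → ℝ)
    (hmono : ∀ a b : ℤ, -N - 1 ≤ a → b ≤ N + 2 → a < b → ℓ a < ℓ b)
    (j0 : ℤ) (hj0 : -N ≤ j0) (hj0' : j0 ≤ N)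
    (i : ℤ) (h1 : ℓ j0 ≤ i) (h2 : i ≤ ℓ (j0 + 1)) :
    yInterp N ℓ z i =
      z j0 + ((i - ℓ j0 : ℤ) : ℝ) / ((ℓ (j0 + 1) - ℓ j0 : ℤ) : ℝ) * (z (j0 + 1) - z j0) := by
  have hmono' : ∀ a b : ℤ, -N - 1 ≤ a → b ≤ N + 2 → a ≤ b → ℓ a ≤ ℓ b := by
    intro a b ha hb hab
    rcases eq_or_lt_of_le hab with rfl | h
    · exact le_rfl
    · exact (hmono a b ha hb h).le
  have hν : ℓ j0 < ℓ (j0 + 1) := hmono j0 (j0 + 1) (by omega) (by omega) (by omega)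
  have hνR : ((ℓ (j0 + 1) - ℓ j0 : ℤ) : ℝ) ≠ 0 := by
    exact_mod_cast (by omega : (ℓ (j0 + 1) - ℓ j0 : ℤ) ≠ 0)
  have hsub : ({j0, j0 + 1} : Finset ℤ) ⊆ Icc (-N) (N + 1) := by
    intro k hk
    simp only [Finset.mem_insert, Finset.mem_singleton] at hk
    rcases hk with rfl | rfl <;> simp only [mem_Icc] <;> omega
  rw [yInterp, ← Finset.sum_subset hsub ?_, Finset.sum_pair (by omega : j0 ≠ j0 + 1)]
  · -- compute the two hat values
    have hval2 : hatS ℓ (j0 + 1) i = ((i - ℓ j0 : ℤ) : ℝ) / ((ℓ (j0 + 1) - ℓ j0 : ℤ) : ℝ) := by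
      unfold hatS
      rw [if_pos ⟨by simpa using h1, h2⟩]
      norm_num
    have hval1 : hatS ℓ j0 i =
        1 - ((i - ℓ j0 : ℤ) : ℝ) / ((ℓ (j0 + 1) - ℓ j0 : ℤ) : ℝ) := by
      unfold hatS
      have hlow : ℓ (j0 - 1) < ℓ j0 := hmono (j0 - 1) j0 (by omega) (by omega) (by omega)
      split_ifs with hA hB
      · -- i = ℓ j0
        have hie : i = ℓ j0 := le_antisymm hA.2 h1
        rw [hie]
        have hd : ((ℓ j0 - ℓ (j0 - 1) : ℤ) : ℝ) ≠ 0 := by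
          exact_mod_cast (by omega : (ℓ j0 - ℓ (j0 - 1) : ℤ) ≠ 0)
        push_cast at hd ⊢
        rw [sub_self, zero_div, sub_zero, div_self hd]
      · have hν' : ((ℓ (j0 + 1) : ℤ) : ℝ) - ((ℓ j0 : ℤ) : ℝ) ≠ 0 := by
          push_cast at hνR; exact hνR
        push_cast
        rw [eq_sub_iff_add_eq, ← add_div, div_eq_one_iff_eq hν']
        ring
      · exact absurd ⟨h1, h2⟩ hB
    rw [hval1, hval2]
    ring
  · intro k hk hk'
    simp only [mem_Icc] at hk
    simp only [Finset.mem_insert, Finset.mem_singleton] at hk'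
    push_neg at hk'
    obtain ⟨hk1, hk2⟩ := hk'
    unfold hatS
    split_ifs with hA hB
    · -- ℓ (k-1) ≤ i ∧ i ≤ ℓ k
      rcases lt_or_gt_of_ne hk1 with hlt | hgt
      · exact absurd (hmono k j0 (by omega) (by omega) hlt) (by omega)
      · -- k ≥ j0 + 2
        have hk2' : j0 + 2 ≤ k := by omega
        have : ℓ (j0 + 1) ≤ ℓ (k - 1) := hmono' (j0 + 1) (k - 1) (by omega) (by omega) (by omega)
        have hie : i = ℓ (k - 1) := by omega
        rw [hie]
        simp
    · -- ℓ k ≤ i ∧ i ≤ ℓ (k+1)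
      rcases lt_or_gt_of_ne hk1 with hlt | hgt
      · -- k < j0 : i = ℓ (k+1)
        have : ℓ (k + 1) ≤ ℓ j0 := hmono' (k + 1) j0 (by omega) (by omega) (by omega)
        have hie : i = ℓ (k + 1) := by omega
        rw [hie]
        simp
      · have : ℓ (j0 + 1) < ℓ k := hmono (j0 + 1) k (by omega) (by omega) (by omega)
        omega
    · simp

/-- auxiliary nearest-neighbour term of the force. -/
noncomputable def gAux (φ : ℝ → ℝ) (M : ℤ) (y : ℤ → ℝ) (i : ℤ) : ℝ :=
  if -M ≤ i ∧ i ≤ M then deriv φ (y (i + 1) - y i) else 0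

/-- auxiliary next-nearest-neighbour term of the force. -/
noncomputable def hAux (φ : ℝ → ℝ) (M : ℤ) (y : ℤ → ℝ) (i : ℤ) : ℝ :=
  if -M ≤ i ∧ i ≤ M - 1 then deriv φ (y (i + 2) - y i) else 0

lemma Fa_eq (φ : ℝ → ℝ) (M : ℤ) (y : ℤ → ℝ) (i : ℤ) :
    Fa φ M y i = (gAux φ M y i + hAux φ M y i) - (gAux φ M y (i - 1) + hAux φ M y (i - 2)) := by
  unfold Fa gAux hAux
  have c1 : ((-M ≤ i ∧ i ≤ M + 1) ∧ (-M ≤ i + 1 ∧ i + 1 ≤ M + 1)) ↔ (-M ≤ i ∧ i ≤ M) := by omega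
  have c2 : ((-M ≤ i ∧ i ≤ M + 1) ∧ (-M ≤ i + 2 ∧ i + 2 ≤ M + 1)) ↔ (-M ≤ i ∧ i ≤ M - 1) := by
    omega
  have c3 : ((-M ≤ i ∧ i ≤ M + 1) ∧ (-M ≤ i - 1 ∧ i - 1 ≤ M + 1)) ↔
      (-M ≤ i - 1 ∧ i - 1 ≤ M) := by omega
  have c4 : ((-M ≤ i ∧ i ≤ M + 1) ∧ (-M ≤ i - 2 ∧ i - 2 ≤ M + 1)) ↔
      (-M ≤ i - 2 ∧ i - 2 ≤ M - 1) := by omega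
  rw [if_congr c1 rfl rfl, if_congr c2 rfl rfl, if_congr c3 rfl rfl, if_congr c4 rfl rfl,
    show i - 1 + 1 = i by ring, show i - 2 + 2 = i by ring]

lemma yInterp_update (N : ℤ) (ℓ : ℤ → ℤ) (z : ℤ → ℝ) (j : ℤ)
    (hj : j ∈ Icc (-N) (N + 1)) (t : ℝ) (i : ℤ) :
    yInterp N ℓ (Function.update z j t) i = yInterp N ℓ z i + hatS ℓ j i * (t - z j) := by
  unfold yInterp
  have hcong : ∀ k ∈ Icc (-N) (N + 1), hatS ℓ k i * Function.update z j t k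
      = hatS ℓ k i * z k + (if k = j then hatS ℓ j i * (t - z j) else 0) := by
    intro k _
    rcases eq_or_ne k j with rfl | hk
    · simp [Function.update_self]; ring
    · simp [Function.update_of_ne hk, hk]
  rw [Finset.sum_congr rfl hcong, Finset.sum_add_distrib, Finset.sum_ite_eq' _ j
    (fun _ => hatS ℓ j i * (t - z j)), if_pos hj]

lemma shift_sum (f : ℤ → ℝ) (a b d : ℤ) :
    ∑ i ∈ Icc a b, f (i - d) = ∑ i ∈ Icc (a - d) (b - d), f i :=
  Finset.sum_nbij' (fun i => i - d) (fun i => i + d)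
    (by intro x hx; simp only [mem_Icc] at hx ⊢; omega)
    (by intro x hx; simp only [mem_Icc] at hx ⊢; omega)
    (by intro x _; show x - d + d = x; ring) (by intro x _; show x + d - d = x; ring)
    (by intro x _; rfl)

lemma hatS_eq_zero_left (ℓ : ℤ → ℤ) (j i : ℤ) (h : i < ℓ (j - 1)) (hm : ℓ (j - 1) ≤ ℓ j) :
    hatS ℓ j i = 0 := by
  unfold hatS
  split_ifs with hA hB
  · omega
  · omega
  · rfl

lemma hatS_eq_zero_right (ℓ : ℤ → ℤ) (j i : ℤ) (h : ℓ (j + 1) < i) (hm : ℓ j ≤ ℓ (j + 1)) :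
    hatS ℓ j i = 0 := by
  unfold hatS
  split_ifs with hA hB
  · omega
  · omega
  · rfl

lemma yInterp_succ_lt (M N : ℤ) (hN : 1 ≤ N) (ℓ : ℤ → ℤ) (z : ℤ → ℝ)
    (hmono : ∀ a b : ℤ, -N - 1 ≤ a → b ≤ N + 2 → a < b → ℓ a < ℓ b)
    (hℓl : ℓ (-N) = -M) (hℓr : ℓ (N + 1) = M + 1)
    (hz : ∀ j ∈ Icc (-N) N, z j < z (j + 1))
    (i : ℤ) (h1 : -M ≤ i) (h2 : i ≤ M) :
    yInterp N ℓ z i < yInterp N ℓ z (i + 1) := by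
  classical
  set T : Finset ℤ := (Icc (-N) N).filter (fun k => ℓ k ≤ i) with hT
  have hTne : (-N) ∈ T := by
    simp only [hT, Finset.mem_filter, mem_Icc]
    constructor
    · constructor <;> omega
    · omega
  set j0 : ℤ := T.max' ⟨-N, hTne⟩ with hj0def
  have hj0T : j0 ∈ T := Finset.max'_mem _ _
  simp only [hT, Finset.mem_filter, mem_Icc] at hj0T
  obtain ⟨⟨hj0l, hj0r⟩, hj0i⟩ := hj0T
  have hup : i < ℓ (j0 + 1) := by
    by_cases hjN : j0 = N
    · rw [hjN, hℓr]; omega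
    · by_contra hle
      push_neg at hle
      have hmem : j0 + 1 ∈ T := by
        simp only [hT, Finset.mem_filter, mem_Icc]
        exact ⟨⟨by omega, by omega⟩, hle⟩
      have := Finset.le_max' T _ hmem
      omega
  have hν : ℓ j0 < ℓ (j0 + 1) := hmono j0 (j0 + 1) (by omega) (by omega) (by omega)
  have hνR : (0 : ℝ) < ((ℓ (j0 + 1) - ℓ j0 : ℤ) : ℝ) := by
    exact_mod_cast (by omega : (0 : ℤ) < ℓ (j0 + 1) - ℓ j0)
  have hΔ : (0 : ℝ) < z (j0 + 1) - z j0 := by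
    have := hz j0 (by simp only [mem_Icc]; exact ⟨hj0l, hj0r⟩)
    linarith
  rw [yInterp_formula N ℓ z hmono j0 hj0l hj0r i hj0i (by omega),
    yInterp_formula N ℓ z hmono j0 hj0l hj0r (i + 1) (by omega) (by omega)]
  have hkey : ((i - ℓ j0 : ℤ) : ℝ) / ((ℓ (j0 + 1) - ℓ j0 : ℤ) : ℝ)
      < ((i + 1 - ℓ j0 : ℤ) : ℝ) / ((ℓ (j0 + 1) - ℓ j0 : ℤ) : ℝ) := by
    apply div_lt_div_of_pos_right ?_ hνR
    exact_mod_cast (by omega : (i - ℓ j0 : ℤ) < i + 1 - ℓ j0)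
  nlinarith [mul_lt_mul_of_pos_right hkey hΔ]

lemma shift_mul_sum (c G : ℤ → ℝ) (a b d : ℤ) :
    ∑ i ∈ Icc a b, c i * G (i - d) = ∑ i ∈ Icc (a - d) (b - d), c (i + d) * G i :=
  Finset.sum_nbij' (fun i => i - d) (fun i => i + d)
    (by intro x hx; simp only [mem_Icc] at hx ⊢; omega)
    (by intro x hx; simp only [mem_Icc] at hx ⊢; omega)
    (by intro x _; show x - d + d = x; ring)
    (by intro x _; show x + d - d = x; ring)
    (by intro x _; rw [show x - d + d = x by ring])

lemma hasDerivAt_affine_comp (φ : ℝ → ℝ) (a d s : ℝ) (hφ : DifferentiableAt ℝ φ a) :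
    HasDerivAt (fun t => φ (a + d * (t - s))) (deriv φ a * d) s := by
  have hinner : HasDerivAt (fun t => a + d * (t - s)) d s := by
    simpa using (((hasDerivAt_id s).sub_const s).const_mul d).const_add a
  have hφd : HasDerivAt φ (deriv φ a) (a + d * (s - s)) := by
    simpa using hφ.hasDerivAt
  simpa [Function.comp_def] using hφd.comp s hinner


/-- The conjugate atomistic force on a representative atom is the hat-function-weighted
average of the atomistic forces:
`F^CQC_j(z) = Σ_{i=0}^{ν_{j−1}} ((ν_{j−1}−i)/ν_{j−1}) F^a_{ℓ_j−i}(y(z))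
            + Σ_{i=1}^{ν_j} ((ν_j−i)/ν_j) F^a_{ℓ_j+i}(y(z))` for `j = −N+1, …, N`. -/
theorem stmt_6 (φ : ℝ → ℝ) (hφC1 : ContDiffOn ℝ 1 φ (Set.Ioi 0))
    (M N : ℤ) (hN : 1 ≤ N) (ℓ : ℤ → ℤ)
    (hℓmono : ∀ j : ℤ, -N - 1 ≤ j → j ≤ N + 1 → ℓ j < ℓ (j + 1))
    (hℓl : ℓ (-N) = -M) (hℓr : ℓ (N + 1) = M + 1)
    (z : ℤ → ℝ) (hz : ∀ j ∈ Icc (-N) N, z j < z (j + 1)) :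
    ∀ j ∈ Icc (-N + 1) N,
      FCQC φ M N ℓ z j =
        (∑ i ∈ Icc (0 : ℤ) (ℓ j - ℓ (j - 1)),
            ((ℓ j - ℓ (j - 1) - i : ℤ) : ℝ) / ((ℓ j - ℓ (j - 1) : ℤ) : ℝ) *
              Fa φ M (yInterp N ℓ z) (ℓ j - i)) +
        ∑ i ∈ Icc (1 : ℤ) (ℓ (j + 1) - ℓ j),
            ((ℓ (j + 1) - ℓ j - i : ℤ) : ℝ) / ((ℓ (j + 1) - ℓ j : ℤ) : ℝ) *
              Fa φ M (yInterp N ℓ z) (ℓ j + i) := by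
  intro j hj
  simp only [mem_Icc] at hj
  obtain ⟨hj1, hj2⟩ := hj
  have hmono : ∀ a b : ℤ, -N - 1 ≤ a → b ≤ N + 2 → a < b → ℓ a < ℓ b := ell_lt N ℓ hℓmono
  have hmono' : ∀ a b : ℤ, -N - 1 ≤ a → b ≤ N + 2 → a ≤ b → ℓ a ≤ ℓ b := by
    intro a b ha hb hab
    rcases eq_or_lt_of_le hab with rfl | h
    · exact le_rfl
    · exact (hmono a b ha hb h).le
  have hν1 : ℓ (j - 1) < ℓ j := hmono _ _ (by omega) (by omega) (by omega)
  have hν2 : ℓ j < ℓ (j + 1) := hmono _ _ (by omega) (by omega) (by omega)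
  have hL : -M ≤ ℓ (j - 1) := by
    have := hmono' (-N) (j - 1) (by omega) (by omega) (by omega)
    omega
  have hR : ℓ (j + 1) ≤ M + 1 := by
    have := hmono' (j + 1) (N + 1) (by omega) (by omega) (by omega)
    omega
  have hjIcc : j ∈ Icc (-N) (N + 1) := by simp only [mem_Icc]; omega
  have hφdiff : ∀ x : ℝ, 0 < x → DifferentiableAt ℝ φ x := fun x hx =>
    (hφC1.differentiableOn one_ne_zero).differentiableAt (isOpen_Ioi.mem_nhds hx)
  have hgap1 : ∀ i : ℤ, -M ≤ i → i ≤ M → 0 < yInterp N ℓ z (i + 1) - yInterp N ℓ z i := by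
    intro i ha hb
    have := yInterp_succ_lt M N hN ℓ z hmono hℓl hℓr hz i ha hb
    linarith
  have hgap2 : ∀ i : ℤ, -M ≤ i → i ≤ M - 1 → 0 < yInterp N ℓ z (i + 2) - yInterp N ℓ z i := by
    intro i ha hb
    have g1 := hgap1 i ha (by omega)
    have g2 := hgap1 (i + 1) (by omega) (by omega)
    rw [show i + 1 + 1 = i + 2 by ring] at g2
    linarith
  -- the function and its derivative
  have hEfun : ∀ t : ℝ, ECQC φ M N ℓ (Function.update z j t)
      = (∑ i ∈ Icc (-M) M, φ (yInterp N ℓ z (i + 1) - yInterp N ℓ z i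
            + (hatS ℓ j (i + 1) - hatS ℓ j i) * (t - z j)))
        + ∑ i ∈ Icc (-M) (M - 1), φ (yInterp N ℓ z (i + 2) - yInterp N ℓ z i
            + (hatS ℓ j (i + 2) - hatS ℓ j i) * (t - z j)) := by
    intro t
    unfold ECQC Eatom
    congr 1
    · refine Finset.sum_congr rfl fun i _ => ?_
      rw [yInterp_update N ℓ z j hjIcc t (i + 1), yInterp_update N ℓ z j hjIcc t i]
      congr 1
      ring
    · refine Finset.sum_congr rfl fun i _ => ?_
      rw [yInterp_update N ℓ z j hjIcc t (i + 2), yInterp_update N ℓ z j hjIcc t i]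
      congr 1
      ring
  have hder : HasDerivAt
      (fun t : ℝ => (∑ i ∈ Icc (-M) M, φ (yInterp N ℓ z (i + 1) - yInterp N ℓ z i
            + (hatS ℓ j (i + 1) - hatS ℓ j i) * (t - z j)))
        + ∑ i ∈ Icc (-M) (M - 1), φ (yInterp N ℓ z (i + 2) - yInterp N ℓ z i
            + (hatS ℓ j (i + 2) - hatS ℓ j i) * (t - z j)))
      ((∑ i ∈ Icc (-M) M, deriv φ (yInterp N ℓ z (i + 1) - yInterp N ℓ z i)
            * (hatS ℓ j (i + 1) - hatS ℓ j i))
        + ∑ i ∈ Icc (-M) (M - 1), deriv φ (yInterp N ℓ z (i + 2) - yInterp N ℓ z i)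
            * (hatS ℓ j (i + 2) - hatS ℓ j i))
      (z j) := by
    refine HasDerivAt.add (HasDerivAt.fun_sum fun i hi => ?_) (HasDerivAt.fun_sum fun i hi => ?_)
    · simp only [mem_Icc] at hi
      exact hasDerivAt_affine_comp φ _ _ _ (hφdiff _ (hgap1 i hi.1 hi.2))
    · simp only [mem_Icc] at hi
      exact hasDerivAt_affine_comp φ _ _ _ (hφdiff _ (hgap2 i hi.1 hi.2))
  have hFC : FCQC φ M N ℓ z j =
      -((∑ i ∈ Icc (-M) M, deriv φ (yInterp N ℓ z (i + 1) - yInterp N ℓ z i)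
            * (hatS ℓ j (i + 1) - hatS ℓ j i))
        + ∑ i ∈ Icc (-M) (M - 1), deriv φ (yInterp N ℓ z (i + 2) - yInterp N ℓ z i)
            * (hatS ℓ j (i + 2) - hatS ℓ j i)) := by
    unfold FCQC
    rw [funext hEfun, hder.deriv]
  -- summation by parts
  have hgsupp : ∀ i : ℤ, i < -M ∨ M < i → gAux φ M (yInterp N ℓ z) i = 0 := by
    intro i hi
    unfold gAux
    rw [if_neg (by omega)]
  have hhsupp : ∀ i : ℤ, i < -M ∨ M - 1 < i → hAux φ M (yInterp N ℓ z) i = 0 := by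
    intro i hi
    unfold hAux
    rw [if_neg (by omega)]
  have SB1 : ∑ i ∈ Icc (-M) (M + 1), hatS ℓ j i * gAux φ M (yInterp N ℓ z) (i - 1)
      = ∑ i ∈ Icc (-M) M, hatS ℓ j (i + 1) * gAux φ M (yInterp N ℓ z) i := by
    rw [shift_mul_sum (fun i => hatS ℓ j i) (gAux φ M (yInterp N ℓ z)) (-M) (M + 1) 1,
      show (M + 1 - 1 : ℤ) = M by ring]
    refine (Finset.sum_subset (by intro x hx; simp only [mem_Icc] at hx ⊢; omega) ?_).symm
    intro x hx hx'
    simp only [mem_Icc] at hx hx'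
    rw [hgsupp x (by omega), mul_zero]
  have SB2 : ∑ i ∈ Icc (-M) (M + 1), hatS ℓ j i * hAux φ M (yInterp N ℓ z) (i - 2)
      = ∑ i ∈ Icc (-M) (M - 1), hatS ℓ j (i + 2) * hAux φ M (yInterp N ℓ z) i := by
    rw [shift_mul_sum (fun i => hatS ℓ j i) (hAux φ M (yInterp N ℓ z)) (-M) (M + 1) 2,
      show (M + 1 - 2 : ℤ) = M - 1 by ring]
    refine (Finset.sum_subset (by intro x hx; simp only [mem_Icc] at hx ⊢; omega) ?_).symm
    intro x hx hx'
    simp only [mem_Icc] at hx hx'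
    rw [hhsupp x (by omega), mul_zero]
  have SB3 : ∑ i ∈ Icc (-M) (M + 1), hatS ℓ j i * gAux φ M (yInterp N ℓ z) i
      = ∑ i ∈ Icc (-M) M, hatS ℓ j i * gAux φ M (yInterp N ℓ z) i := by
    refine (Finset.sum_subset (by intro x hx; simp only [mem_Icc] at hx ⊢; omega) ?_).symm
    intro x hx hx'
    simp only [mem_Icc] at hx hx'
    rw [hgsupp x (by omega), mul_zero]
  have SB4 : ∑ i ∈ Icc (-M) (M + 1), hatS ℓ j i * hAux φ M (yInterp N ℓ z) i
      = ∑ i ∈ Icc (-M) (M - 1), hatS ℓ j i * hAux φ M (yInterp N ℓ z) i := by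
    refine (Finset.sum_subset (by intro x hx; simp only [mem_Icc] at hx ⊢; omega) ?_).symm
    intro x hx hx'
    simp only [mem_Icc] at hx hx'
    rw [hhsupp x (by omega), mul_zero]
  have hgval : ∀ i ∈ Icc (-M) M, gAux φ M (yInterp N ℓ z) i
      = deriv φ (yInterp N ℓ z (i + 1) - yInterp N ℓ z i) := by
    intro i hi
    simp only [mem_Icc] at hi
    unfold gAux
    rw [if_pos hi]
  have hhval : ∀ i ∈ Icc (-M) (M - 1), hAux φ M (yInterp N ℓ z) i
      = deriv φ (yInterp N ℓ z (i + 2) - yInterp N ℓ z i) := by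
    intro i hi
    simp only [mem_Icc] at hi
    unfold hAux
    rw [if_pos hi]
  have e1 : ∑ i ∈ Icc (-M) M, deriv φ (yInterp N ℓ z (i + 1) - yInterp N ℓ z i)
        * (hatS ℓ j (i + 1) - hatS ℓ j i)
      = (∑ i ∈ Icc (-M) M, hatS ℓ j (i + 1) * gAux φ M (yInterp N ℓ z) i)
        - ∑ i ∈ Icc (-M) M, hatS ℓ j i * gAux φ M (yInterp N ℓ z) i := by
    rw [← Finset.sum_sub_distrib]
    refine Finset.sum_congr rfl fun i hi => ?_
    rw [hgval i hi]
    ring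
  have e2 : ∑ i ∈ Icc (-M) (M - 1), deriv φ (yInterp N ℓ z (i + 2) - yInterp N ℓ z i)
        * (hatS ℓ j (i + 2) - hatS ℓ j i)
      = (∑ i ∈ Icc (-M) (M - 1), hatS ℓ j (i + 2) * hAux φ M (yInterp N ℓ z) i)
        - ∑ i ∈ Icc (-M) (M - 1), hatS ℓ j i * hAux φ M (yInterp N ℓ z) i := by
    rw [← Finset.sum_sub_distrib]
    refine Finset.sum_congr rfl fun i hi => ?_
    rw [hhval i hi]
    ring
  have hsum : ∑ i ∈ Icc (-M) (M + 1), hatS ℓ j i * Fa φ M (yInterp N ℓ z) i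
      = -((∑ i ∈ Icc (-M) M, deriv φ (yInterp N ℓ z (i + 1) - yInterp N ℓ z i)
            * (hatS ℓ j (i + 1) - hatS ℓ j i))
        + ∑ i ∈ Icc (-M) (M - 1), deriv φ (yInterp N ℓ z (i + 2) - yInterp N ℓ z i)
            * (hatS ℓ j (i + 2) - hatS ℓ j i)) := by
    have expand : ∑ i ∈ Icc (-M) (M + 1), hatS ℓ j i * Fa φ M (yInterp N ℓ z) i
        = ((∑ i ∈ Icc (-M) (M + 1), hatS ℓ j i * gAux φ M (yInterp N ℓ z) i)
            + ∑ i ∈ Icc (-M) (M + 1), hatS ℓ j i * hAux φ M (yInterp N ℓ z) i)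
          - ((∑ i ∈ Icc (-M) (M + 1), hatS ℓ j i * gAux φ M (yInterp N ℓ z) (i - 1))
            + ∑ i ∈ Icc (-M) (M + 1), hatS ℓ j i * hAux φ M (yInterp N ℓ z) (i - 2)) := by
      rw [← Finset.sum_add_distrib, ← Finset.sum_add_distrib, ← Finset.sum_sub_distrib]
      refine Finset.sum_congr rfl fun i _ => ?_
      rw [Fa_eq]
      ring
    rw [expand, SB1, SB2, SB3, SB4, e1, e2]
    ring
  -- restrict the sum to the support of the hat function
  have hrestrict : ∑ i ∈ Icc (-M) (M + 1), hatS ℓ j i * Fa φ M (yInterp N ℓ z) i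
      = ∑ i ∈ Icc (ℓ (j - 1)) (ℓ (j + 1)), hatS ℓ j i * Fa φ M (yInterp N ℓ z) i := by
    refine (Finset.sum_subset (by intro x hx; simp only [mem_Icc] at hx ⊢; omega) ?_).symm
    intro x hx hx'
    simp only [mem_Icc] at hx hx'
    rcases (by omega : x < ℓ (j - 1) ∨ ℓ (j + 1) < x) with h | h
    · rw [hatS_eq_zero_left ℓ j x h (by omega), zero_mul]
    · rw [hatS_eq_zero_right ℓ j x h (by omega), zero_mul]
  have hsplit : ∑ i ∈ Icc (ℓ (j - 1)) (ℓ (j + 1)), hatS ℓ j i * Fa φ M (yInterp N ℓ z) i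
      = (∑ i ∈ Icc (ℓ (j - 1)) (ℓ j), hatS ℓ j i * Fa φ M (yInterp N ℓ z) i)
        + ∑ i ∈ Ioc (ℓ j) (ℓ (j + 1)), hatS ℓ j i * Fa φ M (yInterp N ℓ z) i := by
    have hun : Icc (ℓ (j - 1)) (ℓ j) ∪ Ioc (ℓ j) (ℓ (j + 1)) = Icc (ℓ (j - 1)) (ℓ (j + 1)) := by
      ext x
      simp only [Finset.mem_union, mem_Icc, mem_Ioc]
      omega
    rw [← hun, Finset.sum_union]
    rw [Finset.disjoint_left]
    intro x hx hx'
    simp only [mem_Icc] at hx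
    simp only [mem_Ioc] at hx'
    omega
  have hre1 : ∑ i ∈ Icc (0 : ℤ) (ℓ j - ℓ (j - 1)),
        ((ℓ j - ℓ (j - 1) - i : ℤ) : ℝ) / ((ℓ j - ℓ (j - 1) : ℤ) : ℝ) *
          Fa φ M (yInterp N ℓ z) (ℓ j - i)
      = ∑ i ∈ Icc (ℓ (j - 1)) (ℓ j), hatS ℓ j i * Fa φ M (yInterp N ℓ z) i := by
    refine Finset.sum_nbij' (fun i => ℓ j - i) (fun x => ℓ j - x)
      (by intro x hx; simp only [mem_Icc] at hx ⊢; omega)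
      (by intro x hx; simp only [mem_Icc] at hx ⊢; omega)
      (by intro x _; show ℓ j - (ℓ j - x) = x; ring)
      (by intro x _; show ℓ j - (ℓ j - x) = x; ring) ?_
    intro i hi
    simp only [mem_Icc] at hi
    have hval : hatS ℓ j (ℓ j - i)
        = ((ℓ j - ℓ (j - 1) - i : ℤ) : ℝ) / ((ℓ j - ℓ (j - 1) : ℤ) : ℝ) := by
      unfold hatS
      rw [if_pos ⟨by omega, by omega⟩, show ℓ j - i - ℓ (j - 1) = ℓ j - ℓ (j - 1) - i by ring]
    rw [hval]
  have hre2 : ∑ i ∈ Icc (1 : ℤ) (ℓ (j + 1) - ℓ j),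
        ((ℓ (j + 1) - ℓ j - i : ℤ) : ℝ) / ((ℓ (j + 1) - ℓ j : ℤ) : ℝ) *
          Fa φ M (yInterp N ℓ z) (ℓ j + i)
      = ∑ i ∈ Ioc (ℓ j) (ℓ (j + 1)), hatS ℓ j i * Fa φ M (yInterp N ℓ z) i := by
    refine Finset.sum_nbij' (fun i => ℓ j + i) (fun x => x - ℓ j)
      (by intro x hx; simp only [mem_Icc, mem_Ioc] at hx ⊢; omega)
      (by intro x hx; simp only [mem_Icc, mem_Ioc] at hx ⊢; omega)
      (by intro x _; show ℓ j + x - ℓ j = x; ring)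
      (by intro x _; show ℓ j + (x - ℓ j) = x; ring) ?_
    intro i hi
    simp only [mem_Icc] at hi
    have hval : hatS ℓ j (ℓ j + i)
        = ((ℓ (j + 1) - ℓ j - i : ℤ) : ℝ) / ((ℓ (j + 1) - ℓ j : ℤ) : ℝ) := by
      unfold hatS
      rw [if_neg (by omega), if_pos ⟨by omega, by omega⟩,
        show ℓ (j + 1) - (ℓ j + i) = ℓ (j + 1) - ℓ j - i by ring]
    rw [hval]
  calc FCQC φ M N ℓ z j
      = -((∑ i ∈ Icc (-M) M, deriv φ (yInterp N ℓ z (i + 1) - yInterp N ℓ z i)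
            * (hatS ℓ j (i + 1) - hatS ℓ j i))
        + ∑ i ∈ Icc (-M) (M - 1), deriv φ (yInterp N ℓ z (i + 2) - yInterp N ℓ z i)
            * (hatS ℓ j (i + 2) - hatS ℓ j i)) := hFC
    _ = ∑ i ∈ Icc (-M) (M + 1), hatS ℓ j i * Fa φ M (yInterp N ℓ z) i := hsum.symm
    _ = ∑ i ∈ Icc (ℓ (j - 1)) (ℓ (j + 1)), hatS ℓ j i * Fa φ M (yInterp N ℓ z) i := hrestrict
    _ = (∑ i ∈ Icc (ℓ (j - 1)) (ℓ j), hatS ℓ j i * Fa φ M (yInterp N ℓ z) i)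
        + ∑ i ∈ Ioc (ℓ j) (ℓ (j + 1)), hatS ℓ j i * Fa φ M (yInterp N ℓ z) i := hsplit
    _ = _ := by rw [← hre1, ← hre2]
end

section
/- The work-per-unit-parameter function of the continuation algorithm is strictly decreasing in the step size: for any ε > 0, k > 0, and 0 < α < 1, the function W(h) := ln(ε/(ε + k h)) / (h ln α) is strictly decreasing on (0, ∞). -/
/-- The work-per-unit-parameter function `W(h) = ln(ε/(ε + k h)) / (h ln α)` of the
continuation algorithm is strictly decreasing in the step size `h` on `(0, ∞)`. -/
theorem stmt_12 (ε k α : ℝ) (hε : 0 < ε) (hk : 0 < k) (hα0 : 0 < α) (hα1 : α < 1) :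
    StrictAntiOn (fun h : ℝ => Real.log (ε / (ε + k * h)) / (h * Real.log α))
      (Set.Ioi (0 : ℝ)) := by
  have hlog : Real.log α < 0 := Real.log_neg hα0 hα1
  intro a ha b hb hab
  simp only [Set.mem_Ioi] at ha hb
  have hεa : 0 < ε + k * a := by positivity
  have hεb : 0 < ε + k * b := by positivity
  have key := strictConcaveOn_log_Ioi.secant_strict_mono (a := ε)
    (x := ε + k * a) (y := ε + k * b) (Set.mem_Ioi.mpr hε) (Set.mem_Ioi.mpr hεa)
    (Set.mem_Ioi.mpr hεb) (by nlinarith) (by nlinarith) (by nlinarith)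
  have heq : ∀ h : ℝ, 0 < h →
      Real.log (ε / (ε + k * h)) / (h * Real.log α)
        = ((Real.log (ε + k * h) - Real.log ε) / (ε + k * h - ε)) * (k / (-Real.log α)) := by
    intro h hh
    have : 0 < ε + k * h := by positivity
    rw [Real.log_div hε.ne' this.ne']
    field_simp [hk.ne', hlog.ne]
    ring
  simp only [heq a ha, heq b hb]
  exact mul_lt_mul_of_pos_right key (div_pos hk (neg_pos.mpr hlog))
end

section
/- With uniform step size h = 1/Q (Q a positive integer), load steps s_q := q h, step-size restriction k h + ε ≤ δ, and a number of iterations P ∈ ℕ satisfying α^P (k h + ε) ≤ ε, the continuation iterates defined by z_0 ∈ ℝⁿ with ‖z(0) − z_0‖ ≤ ε and z_q := T_{s_q}^P z_{q−1} (P-fold composition) for q = 1, …, Q satisfy ‖z(s_q) − z_q‖ ≤ ε for every q = 0, …, Q. -/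
/-- Continuation with uniform step size `h = 1/Q`, load steps `s_q = q h`, step-size
restriction `k h + ε ≤ δ`, and `P` iterations per step with `α^P (k h + ε) ≤ ε`:
the iterates `z_q = T_{s_q}^P z_{q−1}` stay within distance `ε` (in the maximum norm on
`ℝⁿ`, i.e. the sup norm on `Fin n → ℝ`) of the exact solution path `z(s_q)`. -/
theorem stmt_13 (n : ℕ) (hn : 1 ≤ n) (z : ℝ → (Fin n → ℝ)) (k α δ ε : ℝ)
    (hk : 0 < k) (hα0 : 0 < α) (hα1 : α < 1) (hδ : 0 < δ) (hε : 0 < ε) (hεδ : ε ≤ δ)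
    (hz : ∀ s t : ℝ, 0 ≤ s → s ≤ t → t ≤ 1 → ‖z t - z s‖ ≤ k * (t - s))
    (T : ℝ → (Fin n → ℝ) → (Fin n → ℝ))
    (hTfix : ∀ s : ℝ, 0 ≤ s → s ≤ 1 → T s (z s) = z s)
    (hTcontr : ∀ s : ℝ, 0 ≤ s → s ≤ 1 → ∀ p q : Fin n → ℝ,
      ‖p - z s‖ ≤ δ → ‖q - z s‖ ≤ δ → ‖T s p - T s q‖ ≤ α * ‖p - q‖)
    (Q : ℕ) (hQ : 0 < Q) (h : ℝ) (hh : h = 1 / (Q : ℝ))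
    (hstep : k * h + ε ≤ δ)
    (P : ℕ) (hP : α ^ P * (k * h + ε) ≤ ε)
    (w : ℕ → (Fin n → ℝ)) (hw0 : ‖z 0 - w 0‖ ≤ ε)
    (hwrec : ∀ q : ℕ, 1 ≤ q → q ≤ Q → w q = (T ((q : ℝ) * h))^[P] (w (q - 1))) :
    ∀ q : ℕ, q ≤ Q → ‖z ((q : ℝ) * h) - w q‖ ≤ ε := by
  have hQ' : (0 : ℝ) < (Q : ℝ) := by exact_mod_cast hQ
  have hhpos : 0 < h := by rw [hh]; positivity
  have hC : 0 < k * h + ε := by positivity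
  -- key iteration lemma
  have key : ∀ s : ℝ, 0 ≤ s → s ≤ 1 → ∀ p : Fin n → ℝ, ‖p - z s‖ ≤ k * h + ε →
      ∀ m : ℕ, ‖(T s)^[m] p - z s‖ ≤ α ^ m * (k * h + ε) := by
    intro s hs0 hs1 p hp m
    induction m with
    | zero => simpa using hp
    | succ m ih =>
      have hαm : α ^ m ≤ 1 := pow_le_one₀ hα0.le hα1.le
      have hball : ‖(T s)^[m] p - z s‖ ≤ δ := by
        calc ‖(T s)^[m] p - z s‖ ≤ α ^ m * (k * h + ε) := ih
        _ ≤ 1 * (k * h + ε) := mul_le_mul_of_nonneg_right hαm hC.le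
        _ ≤ δ := by linarith
      have hzball : ‖z s - z s‖ ≤ δ := by simp [hδ.le]
      have := hTcontr s hs0 hs1 ((T s)^[m] p) (z s) hball hzball
      rw [hTfix s hs0 hs1] at this
      rw [Function.iterate_succ_apply']
      calc ‖T s ((T s)^[m] p) - z s‖ ≤ α * ‖(T s)^[m] p - z s‖ := this
      _ ≤ α * (α ^ m * (k * h + ε)) := mul_le_mul_of_nonneg_left ih hα0.le
      _ = α ^ (m + 1) * (k * h + ε) := by ring
  intro q
  induction q with
  | zero => intro _; simpa using hw0
  | succ q ih =>
    intro hq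
    have hqQ : q ≤ Q := Nat.le_of_succ_le hq
    have ihq := ih hqQ
    have hs0 : (0 : ℝ) ≤ (q : ℝ) * h := by positivity
    have hs0' : (0 : ℝ) ≤ ((q : ℕ) + 1 : ℝ) * h := by positivity
    have hs1' : ((q : ℝ) + 1) * h ≤ 1 := by
      rw [hh]
      rw [div_eq_mul_inv, one_mul, mul_inv_le_iff₀ hQ', one_mul]
      exact_mod_cast hq
    have hle : (q : ℝ) * h ≤ ((q : ℝ) + 1) * h :=
      mul_le_mul_of_nonneg_right (by linarith) hhpos.le
    have hzz : ‖z (((q : ℝ) + 1) * h) - z ((q : ℝ) * h)‖ ≤ k * h := by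
      have := hz ((q : ℝ) * h) (((q : ℝ) + 1) * h) hs0 hle hs1'
      calc ‖z (((q : ℝ) + 1) * h) - z ((q : ℝ) * h)‖
          ≤ k * (((q : ℝ) + 1) * h - (q : ℝ) * h) := this
        _ = k * h := by ring
    have hnear : ‖w q - z (((q : ℝ) + 1) * h)‖ ≤ k * h + ε := by
      have h1 := norm_sub_le_norm_sub_add_norm_sub
        (z (((q : ℝ) + 1) * h)) (z ((q : ℝ) * h)) (w q)
      rw [norm_sub_rev]
      linarith
    have hrec := hwrec (q + 1) (Nat.succ_le_succ (Nat.zero_le q)) hq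
    simp only [Nat.add_sub_cancel] at hrec
    have hkey := key (((q : ℕ) + 1 : ℝ) * h) hs0' (by push_cast; exact hs1') (w q)
      (by push_cast; exact hnear) P
    rw [norm_sub_rev]
    push_cast at hrec ⊢
    rw [hrec]
    calc ‖(T (((q : ℝ) + 1) * h))^[P] (w q) - z (((q : ℝ) + 1) * h)‖
        ≤ α ^ P * (k * h + ε) := by push_cast at hkey; exact hkey
      _ ≤ ε := hP
end

section
/- Suppose in addition that the continuous piecewise linear interpolant Iz of the exact values z(s_q) at the nodes s_q (q = 0, …, Q) satisfies max_{s ∈ [0,1]} ‖z(s) − (Iz)(s)‖ ≤ ε. Then the continuous piecewise linear interpolant z̃ of the computed values z_q at the nodes s_q satisfies max_{s ∈ [0,1]} ‖z(s) − z̃(s)‖ ≤ 2ε. -/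
/-- If the continuous piecewise linear interpolant of the exact values `z(s_q)` is within
`ε` of `z` uniformly on `[0,1]`, then the continuous piecewise linear interpolant of the
computed continuation iterates `z_q` is within `2ε` of `z` uniformly on `[0,1]`
(maximum norm on `ℝⁿ`, i.e. the sup norm on `Fin n → ℝ`; the interpolants are expressed
piecewise on each subinterval `[s_{q−1}, s_q]`). -/
theorem stmt_14 (n : ℕ) (hn : 1 ≤ n) (z : ℝ → (Fin n → ℝ)) (k α δ ε : ℝ)
    (hk : 0 < k) (hα0 : 0 < α) (hα1 : α < 1) (hδ : 0 < δ) (hε : 0 < ε) (hεδ : ε ≤ δ)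
    (hz : ∀ s t : ℝ, 0 ≤ s → s ≤ t → t ≤ 1 → ‖z t - z s‖ ≤ k * (t - s))
    (T : ℝ → (Fin n → ℝ) → (Fin n → ℝ))
    (hTfix : ∀ s : ℝ, 0 ≤ s → s ≤ 1 → T s (z s) = z s)
    (hTcontr : ∀ s : ℝ, 0 ≤ s → s ≤ 1 → ∀ p q : Fin n → ℝ,
      ‖p - z s‖ ≤ δ → ‖q - z s‖ ≤ δ → ‖T s p - T s q‖ ≤ α * ‖p - q‖)
    (Q : ℕ) (hQ : 0 < Q) (h : ℝ) (hh : h = 1 / (Q : ℝ))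
    (hstep : k * h + ε ≤ δ)
    (P : ℕ) (hP : α ^ P * (k * h + ε) ≤ ε)
    (w : ℕ → (Fin n → ℝ)) (hw0 : ‖z 0 - w 0‖ ≤ ε)
    (hwrec : ∀ q : ℕ, 1 ≤ q → q ≤ Q → w q = (T ((q : ℝ) * h))^[P] (w (q - 1)))
    (hinterp : ∀ q : ℕ, 1 ≤ q → q ≤ Q → ∀ s : ℝ, ((q : ℝ) - 1) * h ≤ s → s ≤ (q : ℝ) * h →
      ‖z s - (z (((q : ℝ) - 1) * h) +
        ((s - ((q : ℝ) - 1) * h) / h) • (z ((q : ℝ) * h) - z (((q : ℝ) - 1) * h)))‖ ≤ ε) :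
    ∀ q : ℕ, 1 ≤ q → q ≤ Q → ∀ s : ℝ, ((q : ℝ) - 1) * h ≤ s → s ≤ (q : ℝ) * h →
      ‖z s - (w (q - 1) + ((s - ((q : ℝ) - 1) * h) / h) • (w q - w (q - 1)))‖ ≤ 2 * ε := by
  have hQR : (0:ℝ) < Q := by exact_mod_cast hQ
  have hh0 : 0 < h := by rw [hh]; positivity
  -- bounds on node points
  have hnode : ∀ q : ℕ, q ≤ Q → (q:ℝ) * h ≤ 1 := by
    intro q hq
    rw [hh]
    rw [mul_one_div, div_le_one hQR]
    exact_mod_cast hq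
  -- iterate contraction lemma
  have hiter : ∀ s : ℝ, 0 ≤ s → s ≤ 1 → ∀ j : ℕ, ∀ p : Fin n → ℝ, ‖p - z s‖ ≤ δ →
      ‖(T s)^[j] p - z s‖ ≤ α ^ j * ‖p - z s‖ := by
    intro s hs0 hs1 j
    induction j with
    | zero => intro p hp; simp
    | succ j ih =>
      intro p hp
      have h1 := ih p hp
      have hαj : α ^ j ≤ 1 := pow_le_one₀ hα0.le hα1.le
      have h2 : ‖(T s)^[j] p - z s‖ ≤ δ := by
        calc ‖(T s)^[j] p - z s‖ ≤ α ^ j * ‖p - z s‖ := h1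
        _ ≤ 1 * δ := by
            apply mul_le_mul hαj hp (norm_nonneg _) zero_le_one
        _ = δ := one_mul δ
      rw [Function.iterate_succ_apply']
      calc ‖T s ((T s)^[j] p) - z s‖ = ‖T s ((T s)^[j] p) - T s (z s)‖ := by
            rw [hTfix s hs0 hs1]
      _ ≤ α * ‖(T s)^[j] p - z s‖ := by
            apply hTcontr s hs0 hs1 _ _ h2 (by simp [hδ.le])
      _ ≤ α * (α ^ j * ‖p - z s‖) := by
            exact mul_le_mul_of_nonneg_left h1 hα0.le
      _ = α ^ (j+1) * ‖p - z s‖ := by ring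
  -- node estimate
  have hnodeest : ∀ q : ℕ, q ≤ Q → ‖z ((q:ℝ) * h) - w q‖ ≤ ε := by
    intro q
    induction q with
    | zero => intro _; simpa using hw0
    | succ q ih =>
      intro hq
      have hq' : q ≤ Q := Nat.le_of_succ_le hq
      have hqh0 : (0:ℝ) ≤ (q:ℝ) * h := by positivity
      have hq1h : ((q:ℝ)+1) * h ≤ 1 := by
        have := hnode (q+1) hq; push_cast at this ⊢; linarith
      have hq1h0 : (0:ℝ) ≤ ((q:ℝ)+1) * h := by positivity
      have hle : (q:ℝ) * h ≤ ((q:ℝ)+1) * h := by nlinarith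
      have hzz : ‖z (((q:ℝ)+1) * h) - z ((q:ℝ) * h)‖ ≤ k * h := by
        have := hz ((q:ℝ)*h) (((q:ℝ)+1)*h) hqh0 hle hq1h
        calc ‖z (((q:ℝ)+1) * h) - z ((q:ℝ) * h)‖ ≤ k * (((q:ℝ)+1)*h - (q:ℝ)*h) := this
        _ = k * h := by ring_nf
      have hwq : ‖w q - z (((q:ℝ)+1) * h)‖ ≤ k * h + ε := by
        have h1 := ih hq'
        calc ‖w q - z (((q:ℝ)+1) * h)‖
            ≤ ‖w q - z ((q:ℝ)*h)‖ + ‖z ((q:ℝ)*h) - z (((q:ℝ)+1) * h)‖ := norm_sub_le_norm_sub_add_norm_sub _ _ _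
        _ ≤ ε + (k*h) := by
            have h1' : ‖w q - z ((q:ℝ)*h)‖ ≤ ε := by rwa [norm_sub_rev] at h1
            have hzz' : ‖z ((q:ℝ)*h) - z (((q:ℝ)+1)*h)‖ ≤ k*h := by rwa [norm_sub_rev] at hzz
            exact add_le_add h1' hzz'
        _ = k * h + ε := by ring
      have hwrec' := hwrec (q+1) (Nat.succ_le_succ (Nat.zero_le q)) hq
      simp only [Nat.add_sub_cancel] at hwrec'
      have hcast : ((q+1:ℕ):ℝ) = (q:ℝ)+1 := by push_cast; ring
      rw [norm_sub_rev, hwrec', hcast]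
      calc ‖(T (((q:ℝ)+1)*h))^[P] (w q) - z (((q:ℝ)+1)*h)‖
          ≤ α ^ P * ‖w q - z (((q:ℝ)+1)*h)‖ :=
            hiter _ hq1h0 hq1h P (w q) (le_trans hwq hstep)
      _ ≤ α ^ P * (k * h + ε) := by
            exact mul_le_mul_of_nonneg_left hwq (by positivity)
      _ ≤ ε := hP
  -- main result
  intro q hq1 hqQ s hs1 hs2
  set a : ℝ := ((q:ℝ) - 1) * h with ha
  set θ : ℝ := (s - a) / h with hθ
  have hθ0 : 0 ≤ θ := by
    apply div_nonneg _ hh0.le; linarith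
  have hθ1 : θ ≤ 1 := by
    rw [hθ, div_le_one hh0]
    have : (q:ℝ) * h - a = h := by rw [ha]; ring
    linarith
  have hcast : (((q-1:ℕ)):ℝ) = (q:ℝ) - 1 := by
    have : (1:ℕ) ≤ q := hq1
    push_cast [this]; ring
  have he1 : ‖z a - w (q-1)‖ ≤ ε := by
    have := hnodeest (q-1) (le_trans (Nat.sub_le q 1) hqQ)
    rwa [hcast] at this
  have he2 : ‖z ((q:ℝ)*h) - w q‖ ≤ ε := hnodeest q hqQ
  have hint := hinterp q hq1 hqQ s hs1 hs2
  have key : z s - (w (q-1) + θ • (w q - w (q-1))) =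
      (z s - (z a + θ • (z ((q:ℝ)*h) - z a))) +
      ((1-θ) • (z a - w (q-1)) + θ • (z ((q:ℝ)*h) - w q)) := by
    module
  rw [key]
  calc ‖(z s - (z a + θ • (z ((q:ℝ)*h) - z a))) +
      ((1-θ) • (z a - w (q-1)) + θ • (z ((q:ℝ)*h) - w q))‖
      ≤ ‖z s - (z a + θ • (z ((q:ℝ)*h) - z a))‖ +
        (‖(1-θ) • (z a - w (q-1))‖ + ‖θ • (z ((q:ℝ)*h) - w q)‖) :=
        le_trans (norm_add_le _ _) (by gcongr; exact norm_add_le _ _)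
  _ ≤ ε + ((1-θ) * ε + θ * ε) := by
      apply add_le_add hint
      apply add_le_add
      · rw [norm_smul, Real.norm_eq_abs, abs_of_nonneg (by linarith)]
        exact mul_le_mul_of_nonneg_left he1 (by linarith)
      · rw [norm_smul, Real.norm_eq_abs, abs_of_nonneg hθ0]
        exact mul_le_mul_of_nonneg_left he2 hθ0
  _ = 2 * ε := by ring
end

section
/- Assume the set 𝒜 of admissible loading paths is nonempty and let W_min denote the minimum of the total work Σ_{q=1}^Q P_q over 𝒜. Then there exists an admissible loading path ({P_q}_{q=1}^Q, {s_q}_{q=0}^Q) ∈ 𝒜 with Σ_{q=1}^Q P_q = W_min such that P_q = 1 and κ(s_q) − κ(s_{q−1}) + γ_{q−1} = δ(s_q) for every q = 1, …, Q−1; moreover this path has the lowest supersolution error γ_Q among all admissible loading paths whose total work is at most W_min. -/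
/-- A loading path: an integer `Q ≥ 1`, numbers of iterations `P_1, …, P_Q` (each `≥ 1`),
and load steps `0 = s_0 ≤ s_1 ≤ ⋯ ≤ s_Q = 1`. -/
structure LoadingPath where
  Q : ℕ
  hQ : 1 ≤ Q
  P : ℕ → ℕ
  hP : ∀ q : ℕ, 1 ≤ q → q ≤ Q → 1 ≤ P q
  s : ℕ → ℝ
  hs0 : s 0 = 0
  hsQ : s Q = 1
  hsmono : ∀ q : ℕ, q < Q → s q ≤ s (q + 1)

/-- The error supersolution of a loading path:
`γ_0 = γ₀` and `γ_q = α^{P_q}(κ(s_q) − κ(s_{q−1}) + γ_{q−1})` for `q = 1, …, Q`. -/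
noncomputable def gammaSeq (α : ℝ) (κ : ℝ → ℝ) (γ0 : ℝ) (L : LoadingPath) : ℕ → ℝ
  | 0 => γ0
  | q + 1 => α ^ L.P (q + 1) * (κ (L.s (q + 1)) - κ (L.s q) + gammaSeq α κ γ0 L q)

/-- Admissibility of a loading path: each initial guess stays in the contraction region,
`κ(s_q) − κ(s_{q−1}) + γ_{q−1} ≤ δ(s_q)` for `q = 1, …, Q`, and `γ_Q ≤ ε`. -/
def Admissible (α ε : ℝ) (κ δ : ℝ → ℝ) (γ0 : ℝ) (L : LoadingPath) : Prop :=
  (∀ q : ℕ, 1 ≤ q → q ≤ L.Q →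
    κ (L.s q) - κ (L.s (q - 1)) + gammaSeq α κ γ0 L (q - 1) ≤ δ (L.s q)) ∧
  gammaSeq α κ γ0 L L.Q ≤ ε

/-- The total work of a loading path: `Σ_{q=1}^Q P_q`. -/
def work (L : LoadingPath) : ℕ := ∑ q ∈ Finset.Icc 1 L.Q, L.P q

namespace Stmt17

/-- Feasible next steps from state `(s, g)`. -/
def feas (κ δ : ℝ → ℝ) (s g : ℝ) : Set ℝ :=
  {t | t ∈ Set.Icc s 1 ∧ κ t - κ s + g ≤ δ t}

noncomputable def nxt (κ δ : ℝ → ℝ) (s g : ℝ) : ℝ := sSup (feas κ δ s g)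

lemma self_mem_feas {κ δ : ℝ → ℝ} {s g : ℝ} (hs : s ∈ Set.Icc (0:ℝ) 1) (hg : g ≤ δ s) :
    s ∈ feas κ δ s g := ⟨⟨le_refl s, hs.2⟩, by simpa using hg⟩

lemma bddAbove_feas (κ δ : ℝ → ℝ) (s g : ℝ) : BddAbove (feas κ δ s g) :=
  ⟨1, fun t ht => ht.1.2⟩

lemma feas_isCompact {κ δ : ℝ → ℝ} (hκc : ContinuousOn κ (Set.Icc 0 1))
    (hδc : ContinuousOn δ (Set.Icc 0 1)) {s : ℝ} (hs : s ∈ Set.Icc (0:ℝ) 1) (g : ℝ) :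
    IsCompact (feas κ δ s g) := by
  have hf : ContinuousOn (fun t => κ t - κ s + g - δ t) (Set.Icc 0 1) :=
    ((hκc.sub continuousOn_const).add continuousOn_const).sub hδc
  have hcl : IsClosed (Set.Icc (0:ℝ) 1 ∩ (fun t => κ t - κ s + g - δ t) ⁻¹' Set.Iic 0) :=
    hf.preimage_isClosed_of_isClosed isClosed_Icc isClosed_Iic
  have heq : feas κ δ s g
      = Set.Icc s 1 ∩ (Set.Icc (0:ℝ) 1 ∩ (fun t => κ t - κ s + g - δ t) ⁻¹' Set.Iic 0) := by
    ext t
    constructor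
    · rintro ⟨ht1, ht2⟩
      exact ⟨ht1, ⟨le_trans hs.1 ht1.1, ht1.2⟩, by simpa using sub_nonpos.mpr ht2⟩
    · rintro ⟨ht1, _, ht3⟩
      exact ⟨ht1, by simpa [sub_nonpos] using ht3⟩
  rw [heq]
  exact isCompact_Icc.inter_right hcl

lemma nxt_mem {κ δ : ℝ → ℝ} (hκc : ContinuousOn κ (Set.Icc 0 1))
    (hδc : ContinuousOn δ (Set.Icc 0 1)) {s g : ℝ} (hs : s ∈ Set.Icc (0:ℝ) 1)
    (hg : g ≤ δ s) : nxt κ δ s g ∈ feas κ δ s g :=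
  (feas_isCompact hκc hδc hs g).sSup_mem ⟨s, self_mem_feas hs hg⟩

lemma le_nxt {κ δ : ℝ → ℝ} {s g t : ℝ} (ht : t ∈ feas κ δ s g) : t ≤ nxt κ δ s g :=
  le_csSup (bddAbove_feas κ δ s g) ht

lemma nxt_eq_of_lt_one {κ δ : ℝ → ℝ} (hκc : ContinuousOn κ (Set.Icc 0 1))
    (hδc : ContinuousOn δ (Set.Icc 0 1)) {s g : ℝ} (hs : s ∈ Set.Icc (0:ℝ) 1)
    (hg : g ≤ δ s) (h1 : nxt κ δ s g < 1) :
    κ (nxt κ δ s g) - κ s + g = δ (nxt κ δ s g) := by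
  set t0 := nxt κ δ s g with ht0
  obtain ⟨ht0Icc, ht0le⟩ := nxt_mem hκc hδc hs hg
  rcases eq_or_lt_of_le ht0le with h | hlt
  · exact h
  · exfalso
    have ht0I : t0 ∈ Set.Icc (0:ℝ) 1 := ⟨le_trans hs.1 ht0Icc.1, ht0Icc.2⟩
    have hf : ContinuousOn (fun t => κ t - κ s + g - δ t) (Set.Icc 0 1) :=
      ((hκc.sub continuousOn_const).add continuousOn_const).sub hδc
    have hcw : ContinuousWithinAt (fun t => κ t - κ s + g - δ t) (Set.Icc 0 1) t0 :=
      hf t0 ht0I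
    have hneg : (fun t => κ t - κ s + g - δ t) t0 < 0 := by simpa [sub_neg] using hlt
    have hev : (fun t => κ t - κ s + g - δ t) ⁻¹' Set.Iio 0 ∈ nhdsWithin t0 (Set.Icc 0 1) :=
      hcw (Iio_mem_nhds hneg)
    have hsub : Set.Ioc t0 1 ⊆ Set.Icc (0:ℝ) 1 :=
      fun x hx => ⟨le_trans ht0I.1 hx.1.le, hx.2⟩
    have hnb : (nhdsWithin t0 (Set.Ioc t0 1)).NeBot := by
      rw [← mem_closure_iff_nhdsWithin_neBot, closure_Ioc (ne_of_lt h1)]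
      exact ⟨le_refl t0, le_of_lt h1⟩
    have hev2 : (fun t => κ t - κ s + g - δ t) ⁻¹' Set.Iio 0 ∈ nhdsWithin t0 (Set.Ioc t0 1) :=
      nhdsWithin_mono t0 hsub hev
    haveI := hnb
    obtain ⟨t, ht, htIoc⟩ := Filter.nonempty_of_mem (Filter.inter_mem hev2 self_mem_nhdsWithin)
    have htfeas : t ∈ feas κ δ s g := by
      refine ⟨⟨le_trans ht0Icc.1 htIoc.1.le, htIoc.2⟩, ?_⟩
      have : κ t - κ s + g - δ t < 0 := ht
      linarith
    exact absurd (le_nxt htfeas) (not_le.mpr htIoc.1)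

lemma nxt_at_one {κ δ : ℝ → ℝ} {g : ℝ} (hg : g ≤ δ 1) : nxt κ δ 1 g = 1 := by
  have : feas κ δ 1 g = {1} := by
    ext t
    simp only [feas, Set.mem_setOf_eq, Set.mem_Icc, Set.mem_singleton_iff]
    constructor
    · rintro ⟨⟨h1, h2⟩, _⟩; linarith
    · rintro rfl; exact ⟨⟨le_refl _, le_refl _⟩, by simpa using hg⟩
  rw [nxt, this, csSup_singleton]


/-- The greedy state sequence: one unit of work per step, biggest feasible step. -/
noncomputable def G (α : ℝ) (κ δ : ℝ → ℝ) (γ0 : ℝ) : ℕ → ℝ × ℝ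
  | 0 => (0, γ0)
  | n + 1 =>
      (nxt κ δ (G α κ δ γ0 n).1 (G α κ δ γ0 n).2,
        α * (κ (nxt κ δ (G α κ δ γ0 n).1 (G α κ δ γ0 n).2) - κ (G α κ δ γ0 n).1
          + (G α κ δ γ0 n).2))

lemma G_zero (α : ℝ) (κ δ : ℝ → ℝ) (γ0 : ℝ) : G α κ δ γ0 0 = (0, γ0) := rfl

lemma G_succ (α : ℝ) (κ δ : ℝ → ℝ) (γ0 : ℝ) (n : ℕ) :
    G α κ δ γ0 (n + 1)
      = (nxt κ δ (G α κ δ γ0 n).1 (G α κ δ γ0 n).2,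
        α * (κ (nxt κ δ (G α κ δ γ0 n).1 (G α κ δ γ0 n).2) - κ (G α κ δ γ0 n).1
          + (G α κ δ γ0 n).2)) := rfl

section Greedy

variable {α γ0 : ℝ} {κ δ : ℝ → ℝ}
variable (hα0 : 0 < α) (hα1 : α < 1)
  (hκc : ContinuousOn κ (Set.Icc 0 1)) (hκm : MonotoneOn κ (Set.Icc 0 1))
  (hδc : ContinuousOn δ (Set.Icc 0 1))
  (hδpos : ∀ t ∈ Set.Icc (0 : ℝ) 1, 0 < δ t)
  (hγ0 : 0 ≤ γ0) (hγ0δ : γ0 < δ 0)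

include hα0 hα1 hκc hκm hδc hδpos hγ0 hγ0δ in
lemma G_wf : ∀ n, (G α κ δ γ0 n).1 ∈ Set.Icc (0:ℝ) 1 ∧ 0 ≤ (G α κ δ γ0 n).2
    ∧ (G α κ δ γ0 n).2 ≤ δ (G α κ δ γ0 n).1 := by
  intro n
  induction n with
  | zero => exact ⟨⟨le_refl _, zero_le_one⟩, hγ0, le_of_lt hγ0δ⟩
  | succ n ih =>
    obtain ⟨hs, hg0, hgδ⟩ := ih
    obtain ⟨htIcc, htcon⟩ := nxt_mem hκc hδc hs hgδ
    set t := nxt κ δ (G α κ δ γ0 n).1 (G α κ δ γ0 n).2 with ht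
    have htI : t ∈ Set.Icc (0:ℝ) 1 := ⟨le_trans hs.1 htIcc.1, htIcc.2⟩
    have hκle : κ (G α κ δ γ0 n).1 ≤ κ t := hκm hs htI htIcc.1
    have hδt : 0 < δ t := hδpos t htI
    refine ⟨htI, ?_, ?_⟩
    · rw [G_succ]
      have : 0 ≤ κ t - κ (G α κ δ γ0 n).1 + (G α κ δ γ0 n).2 := by linarith
      positivity
    · rw [G_succ]
      simp only
      rw [← ht]
      nlinarith [htcon, hκle, hg0, hδt]

include hκc hδc hκm hα0 hα1 hδpos hγ0 hγ0δ in
lemma G_fst_mono (n : ℕ) : (G α κ δ γ0 n).1 ≤ (G α κ δ γ0 (n + 1)).1 := by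
  obtain ⟨hs, _, hgδ⟩ := G_wf hα0 hα1 hκc hκm hδc hδpos hγ0 hγ0δ (α := α) (γ0 := γ0) n
  exact (nxt_mem hκc hδc hs hgδ).1.1

include hκc hδc hκm hα0 hα1 hδpos hγ0 hγ0δ in
lemma G_stay (n : ℕ) (h1 : (G α κ δ γ0 n).1 = 1) :
    ∀ j, G α κ δ γ0 (n + j) = (1, α ^ j * (G α κ δ γ0 n).2) := by
  intro j
  induction j with
  | zero =>
    rw [Nat.add_zero, pow_zero, one_mul, ← h1]
  | succ j ih =>
    obtain ⟨_, hg0, hgδ⟩ := G_wf hα0 hα1 hκc hκm hδc hδpos hγ0 hγ0δ (α := α) (γ0 := γ0) (n + j)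
    have hδ1 : α ^ j * (G α κ δ γ0 n).2 ≤ δ 1 := by
      have h := hgδ; rw [ih] at h; simpa using h
    have hnxt : nxt κ δ (G α κ δ γ0 (n + j)).1 (G α κ δ γ0 (n + j)).2 = 1 := by
      rw [ih]; exact nxt_at_one (by simpa using hδ1)
    have heq : n + (j + 1) = (n + j) + 1 := by omega
    rw [heq, G_succ, hnxt, ih]
    simp only [Prod.mk.injEq]
    exact ⟨trivial, by ring⟩

end Greedy


/-- Dominance invariant: the greedy state at time `w` dominates path state `(s, g)`. -/
def Inv (α : ℝ) (κ δ : ℝ → ℝ) (γ0 : ℝ) (w : ℕ) (s g : ℝ) : Prop :=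
  s ≤ (G α κ δ γ0 w).1 ∧ (G α κ δ γ0 w).2 ≤ g + α * (κ (G α κ δ γ0 w).1 - κ s)

section Compare

variable {α γ0 : ℝ} {κ δ : ℝ → ℝ}
variable (hα0 : 0 < α) (hα1 : α < 1)
  (hκc : ContinuousOn κ (Set.Icc 0 1)) (hκm : MonotoneOn κ (Set.Icc 0 1))
  (hδc : ContinuousOn δ (Set.Icc 0 1))
  (hδpos : ∀ t ∈ Set.Icc (0 : ℝ) 1, 0 < δ t)
  (hγ0 : 0 ≤ γ0) (hγ0δ : γ0 < δ 0)

include hα0 hα1 hκc hκm hδc hδpos hγ0 hγ0δ in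
lemma inv_step {w : ℕ} {s g s' : ℝ} (hs : s ∈ Set.Icc (0:ℝ) 1) (hs' : s' ∈ Set.Icc (0:ℝ) 1)
    (hss' : s ≤ s') (hcon : κ s' - κ s + g ≤ δ s')
    (hinv : Inv α κ δ γ0 w s g) :
    Inv α κ δ γ0 (w + 1) s' (α * (κ s' - κ s + g)) := by
  obtain ⟨hshI, hgh0, hghδ⟩ := G_wf hα0 hα1 hκc hκm hδc hδpos hγ0 hγ0δ (α := α) (γ0 := γ0) w
  set sh := (G α κ δ γ0 w).1 with hsh
  set gh := (G α κ δ γ0 w).2 with hgh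
  obtain ⟨htIcc, htcon⟩ := nxt_mem hκc hδc hshI hghδ
  set t := nxt κ δ sh gh with ht
  have htI : t ∈ Set.Icc (0:ℝ) 1 := ⟨le_trans hshI.1 htIcc.1, htIcc.2⟩
  obtain ⟨hssh, hgγ⟩ := hinv
  have hκssh : κ s ≤ κ sh := hκm hs hshI hssh
  -- key: gh - κ sh ≤ g - κ s
  have hkey : gh - κ sh ≤ g - κ s := by nlinarith
  constructor
  · -- s' ≤ t
    rcases le_or_gt s' sh with h | h
    · exact le_trans h htIcc.1
    · refine le_nxt ⟨⟨le_of_lt h, hs'.2⟩, ?_⟩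
      have : κ s' - κ sh + gh ≤ κ s' - κ s + g := by linarith
      linarith
  · -- error bound
    have hGs : (G α κ δ γ0 (w + 1)).2 = α * (κ t - κ sh + gh) := by rw [G_succ]
    have hGf : (G α κ δ γ0 (w + 1)).1 = t := by rw [G_succ]
    rw [hGs, hGf]
    nlinarith [hkey]

include hα0 hα1 hκc hκm hδc hδpos hγ0 hγ0δ in
lemma inv_stays {s g : ℝ} (hs : s ∈ Set.Icc (0:ℝ) 1) (hg0 : 0 ≤ g) (hgδ : g ≤ δ s) :
    ∀ (j : ℕ) (w : ℕ), Inv α κ δ γ0 w s g → Inv α κ δ γ0 (w + j) s (α ^ j * g) := by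
  intro j
  induction j with
  | zero => intro w h; simpa using h
  | succ j ih =>
    intro w h
    have hj := ih w h
    have hajg0 : 0 ≤ α ^ j * g := by positivity
    have haj1 : α ^ j ≤ 1 := pow_le_one₀ (le_of_lt hα0) (le_of_lt hα1)
    have hcon : κ s - κ s + α ^ j * g ≤ δ s := by nlinarith
    have := inv_step hα0 hα1 hκc hκm hδc hδpos hγ0 hγ0δ hs hs (le_refl s) hcon hj
    have heq : α * (κ s - κ s + α ^ j * g) = α ^ (j + 1) * g := by ring
    rw [heq] at this
    have hw : w + j + 1 = w + (j + 1) := by omega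
    rwa [hw] at this

lemma path_mono (L : LoadingPath) : ∀ a b : ℕ, a ≤ b → b ≤ L.Q → L.s a ≤ L.s b := by
  intro a b hab hbQ
  induction b with
  | zero =>
    have : a = 0 := by omega
    rw [this]
  | succ b ih =>
    rcases Nat.eq_or_lt_of_le hab with h | h
    · rw [h]
    · exact le_trans (ih (by omega) (by omega)) (L.hsmono b (by omega))

lemma path_mem (L : LoadingPath) {q : ℕ} (hq : q ≤ L.Q) : L.s q ∈ Set.Icc (0:ℝ) 1 :=
  ⟨L.hs0 ▸ path_mono L 0 q (Nat.zero_le q) hq, L.hsQ ▸ path_mono L q L.Q hq (le_refl _)⟩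

include hα0 hκm hγ0 in
lemma gamma_nonneg (L : LoadingPath) : ∀ q, q ≤ L.Q → 0 ≤ gammaSeq α κ γ0 L q := by
  intro q
  induction q with
  | zero => intro _; exact hγ0
  | succ q ih =>
    intro hq
    have h1 : 0 ≤ gammaSeq α κ γ0 L q := ih (by omega)
    have h2 : κ (L.s q) ≤ κ (L.s (q + 1)) :=
      hκm (path_mem L (by omega)) (path_mem L hq) (L.hsmono q (by omega))
    show 0 ≤ α ^ L.P (q + 1) * (κ (L.s (q + 1)) - κ (L.s q) + gammaSeq α κ γ0 L q)
    have : (0:ℝ) ≤ α ^ L.P (q + 1) := by positivity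
    nlinarith

include hα0 hα1 hκc hκm hδc hδpos hγ0 hγ0δ in
lemma inv_path {ε : ℝ} (L : LoadingPath) (hadm : Admissible α ε κ δ γ0 L) :
    ∀ q, q ≤ L.Q →
      Inv α κ δ γ0 (∑ i ∈ Finset.Icc 1 q, L.P i) (L.s q) (gammaSeq α κ γ0 L q) := by
  intro q
  induction q with
  | zero =>
    intro _
    simp only [Finset.Icc_self, Finset.Icc_eq_empty_of_lt (by omega : (1:ℕ) > 0)]
    constructor
    · rw [L.hs0]; exact le_refl _
    · show γ0 ≤ gammaSeq α κ γ0 L 0 + α * (κ (G α κ δ γ0 0).1 - κ (L.s 0))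
      rw [L.hs0]
      show γ0 ≤ γ0 + α * (κ 0 - κ 0)
      simp
  | succ q ih =>
    intro hq
    have hqQ : q ≤ L.Q := by omega
    have hinv := ih hqQ
    have hcon := hadm.1 (q + 1) (by omega) hq
    simp only [Nat.add_sub_cancel] at hcon
    have hsq : L.s q ∈ Set.Icc (0:ℝ) 1 := path_mem L hqQ
    have hsq1 : L.s (q + 1) ∈ Set.Icc (0:ℝ) 1 := path_mem L hq
    have hmono : L.s q ≤ L.s (q + 1) := L.hsmono q (by omega)
    have hγq0 : 0 ≤ gammaSeq α κ γ0 L q := gamma_nonneg hα0 hκm hγ0 L q hqQ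
    have hκd : 0 ≤ κ (L.s (q+1)) - κ (L.s q) := sub_nonneg.mpr (hκm hsq hsq1 hmono)
    -- one real step
    have h1 := inv_step hα0 hα1 hκc hκm hδc hδpos hγ0 hγ0δ hsq hsq1 hmono hcon hinv
    -- then P (q+1) - 1 stays
    set c := κ (L.s (q + 1)) - κ (L.s q) + gammaSeq α κ γ0 L q with hc
    have hc0 : 0 ≤ c := by rw [hc]; linarith
    have hαc0 : 0 ≤ α * c := by positivity
    have hαcδ : α * c ≤ δ (L.s (q + 1)) := by nlinarith
    have h2 := inv_stays hα0 hα1 hκc hκm hδc hδpos hγ0 hγ0δ hsq1 hαc0 hαcδ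
      (L.P (q + 1) - 1) _ h1
    have hP1 : 1 ≤ L.P (q + 1) := L.hP (q + 1) (by omega) hq
    have hsum : ∑ i ∈ Finset.Icc 1 (q + 1), L.P i
        = (∑ i ∈ Finset.Icc 1 q, L.P i) + L.P (q + 1) :=
      Finset.sum_Icc_succ_top (by omega) _
    have hwe : (∑ i ∈ Finset.Icc 1 q, L.P i) + 1 + (L.P (q + 1) - 1)
        = ∑ i ∈ Finset.Icc 1 (q + 1), L.P i := by omega
    have hge : α ^ (L.P (q + 1) - 1) * (α * c) = α ^ L.P (q + 1) * c := by
      rw [mul_comm (α ^ (L.P (q+1) - 1)) (α * c), mul_assoc, mul_comm c _, ← mul_assoc,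
        ← pow_succ']
      congr 2
      omega
    rw [hwe, hge] at h2
    exact h2

end Compare

end Stmt17

open Stmt17

/-- Among admissible loading paths of minimal total work `W_min`, there is one with a
single iteration per step and maximal steps (equality in the contraction constraint) at
every step but the last; it has the lowest supersolution error among all admissible
paths of total work at most `W_min`. -/
theorem stmt_17 (ε α γ0 : ℝ) (κ δ : ℝ → ℝ)
    (hε : 0 < ε) (hα0 : 0 < α) (hα1 : α < 1)
    (hκc : ContinuousOn κ (Set.Icc 0 1)) (hκm : MonotoneOn κ (Set.Icc 0 1))
    (hκ0 : κ 0 = 0) (hκnn : ∀ t ∈ Set.Icc (0 : ℝ) 1, 0 ≤ κ t)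
    (hδc : ContinuousOn δ (Set.Icc 0 1)) (hδa : AntitoneOn δ (Set.Icc 0 1))
    (hδpos : ∀ t ∈ Set.Icc (0 : ℝ) 1, 0 < δ t)
    (hγ0 : 0 ≤ γ0) (hγ0δ : γ0 < δ 0)
    (Wmin : ℕ)
    (hWmin_attained : ∃ L : LoadingPath, Admissible α ε κ δ γ0 L ∧ work L = Wmin)
    (hWmin_min : ∀ L : LoadingPath, Admissible α ε κ δ γ0 L → Wmin ≤ work L) :
    ∃ L : LoadingPath, Admissible α ε κ δ γ0 L ∧ work L = Wmin ∧
      (∀ q : ℕ, 1 ≤ q → q < L.Q → L.P q = 1 ∧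
        κ (L.s q) - κ (L.s (q - 1)) + gammaSeq α κ γ0 L (q - 1) = δ (L.s q)) ∧
      (∀ L' : LoadingPath, Admissible α ε κ δ γ0 L' → work L' ≤ Wmin →
        gammaSeq α κ γ0 L L.Q ≤ gammaSeq α κ γ0 L' L'.Q) := by
  classical
  obtain ⟨L0, hL0adm, hL0w⟩ := hWmin_attained
  have wf : ∀ n, (G α κ δ γ0 n).1 ∈ Set.Icc (0:ℝ) 1 ∧ 0 ≤ (G α κ δ γ0 n).2
      ∧ (G α κ δ γ0 n).2 ≤ δ (G α κ δ γ0 n).1 :=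
    G_wf hα0 hα1 hκc hκm hδc hδpos hγ0 hγ0δ
  -- greedy dominates any admissible path at the end of its work
  have key : ∀ (L' : LoadingPath), Admissible α ε κ δ γ0 L' →
      (G α κ δ γ0 (work L')).1 = 1 ∧ (G α κ δ γ0 (work L')).2 ≤ gammaSeq α κ γ0 L' L'.Q := by
    intro L' hadm
    have h := inv_path hα0 hα1 hκc hκm hδc hδpos hγ0 hγ0δ L' hadm L'.Q (le_refl _)
    rw [L'.hsQ] at h
    have h1 : (G α κ δ γ0 (work L')).1 = 1 :=
      le_antisymm (wf (work L')).1.2 h.1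
    refine ⟨h1, ?_⟩
    have h' : Inv α κ δ γ0 (work L') 1 (gammaSeq α κ γ0 L' L'.Q) := h
    have := h'.2
    rw [h1] at this
    simpa using this
  obtain ⟨hG1, hGle⟩ := key L0 hL0adm
  rw [hL0w] at hG1 hGle
  have hex : ∃ n, (G α κ δ γ0 n).1 = 1 := ⟨Wmin, hG1⟩
  set Qh := Nat.find hex with hQh
  have hQhspec : (G α κ δ γ0 Qh).1 = 1 := Nat.find_spec hex
  have hQhW : Qh ≤ Wmin := Nat.find_le hG1
  have hQh1 : 1 ≤ Qh := by
    rcases Nat.eq_zero_or_pos Qh with h | h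
    · exfalso
      have := hQhspec
      rw [h] at this
      norm_num [G_zero] at this
    · exact h
  -- the greedy loading path
  set Lg : LoadingPath :=
    { Q := Qh
      hQ := hQh1
      P := fun q => if q = Qh then Wmin - Qh + 1 else 1
      hP := fun q _ _ => by by_cases h : q = Qh <;> simp [h]
      s := fun q => (G α κ δ γ0 q).1
      hs0 := rfl
      hsQ := hQhspec
      hsmono := fun q _ => G_fst_mono hα0 hα1 hκc hκm hδc hδpos hγ0 hγ0δ q } with hLg
  -- gammaSeq of Lg matches greedy errors below Qh
  have hgam : ∀ q, q < Qh → gammaSeq α κ γ0 Lg q = (G α κ δ γ0 q).2 := by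
    intro q
    induction q with
    | zero => intro _; rfl
    | succ q ih =>
      intro hq
      have hne : q + 1 ≠ Qh := by omega
      show α ^ Lg.P (q + 1) * (κ (Lg.s (q + 1)) - κ (Lg.s q) + gammaSeq α κ γ0 Lg q)
        = (G α κ δ γ0 (q + 1)).2
      have hPq : Lg.P (q + 1) = 1 := by simp [hLg, hne]
      rw [hPq, ih (by omega), pow_one]
      rfl
  -- gammaSeq of Lg at Qh equals greedy error at time Wmin
  have hgamQ : gammaSeq α κ γ0 Lg Qh = (G α κ δ γ0 Wmin).2 := by
    obtain ⟨q', hq'⟩ : ∃ q', Qh = q' + 1 := ⟨Qh - 1, by omega⟩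
    have hstay := G_stay hα0 hα1 hκc hκm hδc hδpos hγ0 hγ0δ Qh hQhspec (Wmin - Qh)
    have hWQ : Qh + (Wmin - Qh) = Wmin := by omega
    rw [hWQ] at hstay
    rw [hstay]
    show gammaSeq α κ γ0 Lg Qh = α ^ (Wmin - Qh) * (G α κ δ γ0 Qh).2
    rw [hq']
    show α ^ Lg.P (q' + 1) * (κ (Lg.s (q' + 1)) - κ (Lg.s q') + gammaSeq α κ γ0 Lg q')
      = α ^ (Wmin - (q' + 1)) * (G α κ δ γ0 (q' + 1)).2
    have hPQ : Lg.P (q' + 1) = Wmin - (q' + 1) + 1 := by simp [hLg, ← hq']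
    rw [hPQ, hgam q' (by omega), G_succ]
    show α ^ (Wmin - (q' + 1) + 1) * (κ (Lg.s (q' + 1)) - κ (Lg.s q') + (G α κ δ γ0 q').2) = _
    have hsg : Lg.s (q' + 1) = nxt κ δ (G α κ δ γ0 q').1 (G α κ δ γ0 q').2 := by
      show (G α κ δ γ0 (q' + 1)).1 = _
      rw [G_succ]
    have hsg' : Lg.s q' = (G α κ δ γ0 q').1 := rfl
    rw [hsg, hsg', pow_succ]
    ring
  -- admissibility of Lg
  have hstep : ∀ q : ℕ, 1 ≤ q → q ≤ Qh →
      κ (Lg.s q) - κ (Lg.s (q - 1)) + gammaSeq α κ γ0 Lg (q - 1) ≤ δ (Lg.s q) := by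
    intro q h1q hqQ
    obtain ⟨q', rfl⟩ : ∃ q', q = q' + 1 := ⟨q - 1, by omega⟩
    simp only [Nat.add_sub_cancel]
    rw [hgam q' (by omega)]
    obtain ⟨hsI, hg0, hgδ⟩ := wf q'
    obtain ⟨htIcc, htcon⟩ := nxt_mem hκc hδc hsI hgδ
    exact htcon
  have hLgadm : Admissible α ε κ δ γ0 Lg := by
    constructor
    · exact hstep
    · show gammaSeq α κ γ0 Lg Qh ≤ ε
      rw [hgamQ]
      exact le_trans hGle hL0adm.2
  -- work of Lg
  have hLgwork : work Lg = Wmin := by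
    show ∑ q ∈ Finset.Icc 1 Qh, Lg.P q = Wmin
    obtain ⟨q', hq'⟩ : ∃ q', Qh = q' + 1 := ⟨Qh - 1, by omega⟩
    rw [hq', Finset.sum_Icc_succ_top (by omega)]
    have h1 : ∀ i ∈ Finset.Icc 1 q', Lg.P i = 1 := by
      intro i hi
      simp only [Finset.mem_Icc] at hi
      have : i ≠ Qh := by omega
      simp [hLg, this]
    rw [Finset.sum_congr rfl h1]
    simp only [Finset.sum_const, Nat.card_Icc, smul_eq_mul, mul_one]
    show q' + 1 - 1 + (if q' + 1 = Qh then Wmin - Qh + 1 else 1) = Wmin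
    rw [if_pos hq'.symm]
    omega
  refine ⟨Lg, hLgadm, hLgwork, ?_, ?_⟩
  · -- single iterations and equality below the top
    intro q h1q hqQ
    have hqQh : q < Qh := hqQ
    constructor
    · have : q ≠ Qh := by omega
      simp [hLg, this]
    · obtain ⟨q', rfl⟩ : ∃ q', q = q' + 1 := ⟨q - 1, by omega⟩
      simp only [Nat.add_sub_cancel]
      rw [hgam q' (by omega)]
      obtain ⟨hsI, hg0, hgδ⟩ := wf q'
      have hlt1 : nxt κ δ (G α κ δ γ0 q').1 (G α κ δ γ0 q').2 < 1 := by
        have hne : (G α κ δ γ0 (q' + 1)).1 ≠ 1 := Nat.find_min hex (by omega : q' + 1 < Qh) |>.imp id |> fun h => h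
        have hle := (wf (q' + 1)).1.2
        have : (G α κ δ γ0 (q' + 1)).1 = nxt κ δ (G α κ δ γ0 q').1 (G α κ δ γ0 q').2 := by
          rw [G_succ]
        rw [this] at hne hle
        exact lt_of_le_of_ne hle hne
      have heq := nxt_eq_of_lt_one hκc hδc hsI hgδ hlt1
      exact heq
  · -- minimal error among paths of work at most Wmin
    intro L' hadm' hW'
    obtain ⟨h1', hle'⟩ := key L' hadm'
    rw [hgamQ]
    have hstay := G_stay hα0 hα1 hκc hκm hδc hδpos hγ0 hγ0δ (work L') h1' (Wmin - work L')
    have hWQ : work L' + (Wmin - work L') = Wmin := by omega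
    rw [hWQ] at hstay
    rw [hstay]
    have hg0 := (wf (work L')).2.1
    have haj1 : α ^ (Wmin - work L') ≤ 1 := pow_le_one₀ (le_of_lt hα0) (le_of_lt hα1)
    have : α ^ (Wmin - work L') * (G α κ δ γ0 (work L')).2 ≤ (G α κ δ γ0 (work L')).2 := by
      nlinarith
    show α ^ (Wmin - work L') * (G α κ δ γ0 (work L')).2 ≤ gammaSeq α κ γ0 L' L'.Q
    exact le_trans this hle'
end

section
/- The optimal loading-path problem is well posed: the set 𝒜 of admissible loading paths is nonempty, and the total work Σ_{q=1}^Q P_q attains its minimum over 𝒜. -/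
/-- The optimal loading-path problem is well posed: the set of admissible loading paths
is nonempty, and the total work attains its minimum over admissible paths. -/
theorem stmt_18 (ε α γ0 : ℝ) (κ δ : ℝ → ℝ)
    (hε : 0 < ε) (hα0 : 0 < α) (hα1 : α < 1)
    (hκc : ContinuousOn κ (Set.Icc 0 1)) (hκm : MonotoneOn κ (Set.Icc 0 1))
    (hκ0 : κ 0 = 0) (hκnn : ∀ t ∈ Set.Icc (0 : ℝ) 1, 0 ≤ κ t)
    (hδc : ContinuousOn δ (Set.Icc 0 1)) (hδa : AntitoneOn δ (Set.Icc 0 1))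
    (hδpos : ∀ t ∈ Set.Icc (0 : ℝ) 1, 0 < δ t)
    (hγ0 : 0 ≤ γ0) (hγ0δ : γ0 < δ 0) :
    (∃ L : LoadingPath, Admissible α ε κ δ γ0 L) ∧
    (∃ L : LoadingPath, Admissible α ε κ δ γ0 L ∧
      ∀ L' : LoadingPath, Admissible α ε κ δ γ0 L' → work L ≤ work L') := by
  have h01 : (0:ℝ) ∈ Set.Icc (0:ℝ) 1 := by norm_num
  have h11 : (1:ℝ) ∈ Set.Icc (0:ℝ) 1 := by norm_num
  have hδ1 : 0 < δ 1 := hδpos 1 h11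
  have hδ0 : 0 < δ 0 := hδpos 0 h01
  have hδ01 : δ 1 ≤ δ 0 := hδa h01 h11 zero_le_one
  -- uniform continuity of κ
  have hκuc : UniformContinuousOn κ (Set.Icc 0 1) :=
    isCompact_Icc.uniformContinuousOn_of_continuous hκc
  rw [Metric.uniformContinuousOn_iff] at hκuc
  obtain ⟨η, hη, hκη⟩ := hκuc (δ 1 / 2) (by positivity)
  obtain ⟨N0, hN0⟩ := exists_nat_gt (1 / η)
  set N : ℕ := max N0 1 with hNdef
  have hNpos : 0 < N := lt_of_lt_of_le one_pos (le_max_right _ _)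
  have hNR : (0:ℝ) < (N:ℝ) := by exact_mod_cast hNpos
  have h1N : (1:ℝ) / N < η := by
    rw [div_lt_iff₀ hNR]
    have : 1 / η < (N:ℝ) := lt_of_lt_of_le hN0 (by exact_mod_cast le_max_left N0 1)
    rw [div_lt_iff₀ hη] at this
    linarith
  -- choose P
  obtain ⟨P0, hP0⟩ := exists_pow_lt_of_lt_one (show (0:ℝ) < min ε (δ 1 / 2) / δ 0 by
    apply div_pos (lt_min hε (by positivity)) hδ0) hα1
  set P : ℕ := max P0 1 with hPdef
  have hαle : α ^ P ≤ α ^ P0 := pow_le_pow_of_le_one hα0.le hα1.le (le_max_left _ _)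
  have hkey : α ^ P * δ 0 ≤ min ε (δ 1 / 2) := by
    have h1 : α ^ P0 * δ 0 ≤ min ε (δ 1 / 2) := by
      rw [← le_div_iff₀ hδ0]
      exact hP0.le
    calc α ^ P * δ 0 ≤ α ^ P0 * δ 0 := by nlinarith [pow_nonneg hα0.le P0]
      _ ≤ _ := h1
  have hαP0 : 0 ≤ α ^ P := pow_nonneg hα0.le P
  have hαP1 : α ^ P ≤ 1 := pow_le_one₀ hα0.le hα1.le
  -- the loading path
  set L : LoadingPath :=
    { Q := N + 1
      hQ := by omega
      P := fun _ => P
      hP := fun _ _ _ => le_max_right _ _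
      s := fun q => max 0 (((q:ℝ) - 1) / N)
      hs0 := by
        show (0:ℝ) ⊔ (((0:ℕ):ℝ) - 1) / (N:ℝ) = 0
        rw [max_eq_left]
        exact div_nonpos_of_nonpos_of_nonneg (by norm_num) hNR.le
      hsQ := by
        show (0:ℝ) ⊔ (((N + 1:ℕ):ℝ) - 1) / (N:ℝ) = 1
        have h : (((N + 1:ℕ):ℝ) - 1) / (N:ℝ) = 1 := by
          push_cast; field_simp
          ring
        rw [h]; exact max_eq_right zero_le_one
      hsmono := by
        intro q _
        refine max_le_max le_rfl ?_
        gcongr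
        push_cast; linarith } with hLdef
  have hsq : ∀ q : ℕ, 1 ≤ q → L.s q = ((q:ℝ) - 1) / N := by
    intro q hq
    apply max_eq_right
    apply div_nonneg _ hNR.le
    have : (1:ℝ) ≤ (q:ℝ) := by exact_mod_cast hq
    linarith
  have hs1 : L.s 1 = 0 := by rw [hsq 1 le_rfl]; norm_num
  have hsmem : ∀ q : ℕ, q ≤ N + 1 → L.s q ∈ Set.Icc (0:ℝ) 1 := by
    intro q hq
    constructor
    · exact le_max_left _ _
    · rcases Nat.eq_zero_or_pos q with h | h
      · subst h; rw [L.hs0]; norm_num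
      · rw [hsq q h]
        rw [div_le_one hNR]
        have : (q:ℝ) ≤ (N:ℝ) + 1 := by exact_mod_cast hq
        linarith
  have hstep : ∀ q : ℕ, 1 ≤ q → q + 1 ≤ N + 1 →
      κ (L.s (q+1)) - κ (L.s q) ≤ δ 1 / 2 := by
    intro q hq hqN
    have hd : dist (L.s (q+1)) (L.s q) < η := by
      rw [hsq (q+1) (by omega), hsq q hq, Real.dist_eq]
      have : ((((q:ℕ)+1:ℕ):ℝ) - 1) / N - (((q:ℕ):ℝ) - 1) / N = 1 / N := by
        push_cast; field_simp; try ring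
      push_cast at this ⊢
      rw [this, abs_of_pos (by positivity)]
      exact h1N
    have := hκη (L.s (q+1)) (hsmem _ hqN) (L.s q) (hsmem _ (by omega)) hd
    rw [Real.dist_eq] at this
    calc κ (L.s (q+1)) - κ (L.s q) ≤ |κ (L.s (q+1)) - κ (L.s q)| := le_abs_self _
      _ ≤ δ 1 / 2 := this.le
  -- the main invariant
  have key : ∀ q : ℕ, 1 ≤ q → q ≤ N + 1 →
      (κ (L.s q) - κ (L.s (q-1)) + gammaSeq α κ γ0 L (q-1) ≤ δ (L.s q)) ∧
      gammaSeq α κ γ0 L q ≤ α ^ P * δ 0 := by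
    intro q hq
    induction q, hq using Nat.le_induction with
    | base =>
      intro _
      have hg0 : gammaSeq α κ γ0 L 0 = γ0 := rfl
      have hg1 : gammaSeq α κ γ0 L 1
          = α ^ P * (κ (L.s 1) - κ (L.s 0) + gammaSeq α κ γ0 L 0) := rfl
      constructor
      · show κ (L.s 1) - κ (L.s (1 - 1)) + gammaSeq α κ γ0 L (1 - 1) ≤ δ (L.s 1)
        rw [show (1:ℕ) - 1 = 0 from rfl, hg0, hs1, L.hs0, hκ0]
        linarith
      · rw [hg1, hg0, hs1, L.hs0]
        simp only [sub_self, zero_add]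
        nlinarith
    | succ q hq ih =>
      intro hqN
      have ihγ : gammaSeq α κ γ0 L q ≤ α ^ P * δ 0 := (ih (by omega)).2
      have hγsmall : gammaSeq α κ γ0 L q ≤ δ 1 / 2 :=
        ihγ.trans (hkey.trans (min_le_right _ _))
      have hcond : κ (L.s (q+1)) - κ (L.s q) + gammaSeq α κ γ0 L q ≤ δ (L.s (q+1)) := by
        have h1 := hstep q hq hqN
        have h2 : δ 1 ≤ δ (L.s (q+1)) := hδa (hsmem _ hqN) h11 (hsmem _ hqN).2
        linarith
      have hcond' : κ (L.s (q+1)) - κ (L.s ((q+1)-1)) + gammaSeq α κ γ0 L ((q+1)-1)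
          ≤ δ (L.s (q+1)) := by simpa using hcond
      refine ⟨hcond', ?_⟩
      have hδle : δ (L.s (q+1)) ≤ δ 0 := hδa h01 (hsmem _ hqN) (hsmem _ hqN).1
      have hgq : gammaSeq α κ γ0 L (q+1)
          = α ^ P * (κ (L.s (q+1)) - κ (L.s q) + gammaSeq α κ γ0 L q) := rfl
      rw [hgq]
      calc α ^ P * (κ (L.s (q+1)) - κ (L.s q) + gammaSeq α κ γ0 L q)
          ≤ α ^ P * δ (L.s (q+1)) := by nlinarith
        _ ≤ α ^ P * δ 0 := by nlinarith
  have hadm : Admissible α ε κ δ γ0 L := by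
    constructor
    · intro q hq hqQ
      exact (key q hq hqQ).1
    · have := (key (N+1) (by omega) le_rfl).2
      calc gammaSeq α κ γ0 L L.Q ≤ α ^ P * δ 0 := this
        _ ≤ ε := hkey.trans (min_le_left _ _)
  refine ⟨⟨L, hadm⟩, ?_⟩
  set S : Set ℕ := {n | ∃ L' : LoadingPath, Admissible α ε κ δ γ0 L' ∧ work L' = n} with hSdef
  have hS : S.Nonempty := ⟨work L, L, hadm, rfl⟩
  obtain ⟨L', hL', hw⟩ := Nat.sInf_mem hS
  exact ⟨L', hL', fun L'' hL'' => hw ▸ Nat.sInf_le ⟨L'', hL'', rfl⟩⟩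
end

section
/- A load step performed with at least two iterations can be split: let 0 ≤ s_j < s_{j+1} ≤ 1 and let P ≥ 2 be an integer such that κ(s_{j+1}) − κ(s_j) + α^P δ(s_j) = δ(s_{j+1}). Then there exists Δs with 0 < Δs < s_{j+1} − s_j such that κ(s_j + Δs) − κ(s_j) + α δ(s_j) = δ(s_j + Δs). -/
/-- A load step performed with at least two iterations can be split: if
`κ(s_{j+1}) − κ(s_j) + α^P δ(s_j) = δ(s_{j+1})` with `P ≥ 2`, then there is
`0 < Δs < s_{j+1} − s_j` with `κ(s_j + Δs) − κ(s_j) + α δ(s_j) = δ(s_j + Δs)`. -/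
theorem stmt_19 (α : ℝ) (hα0 : 0 < α) (hα1 : α < 1) (κ δ : ℝ → ℝ)
    (hκc : ContinuousOn κ (Set.Icc 0 1)) (hκm : MonotoneOn κ (Set.Icc 0 1))
    (hκnn : ∀ t ∈ Set.Icc (0 : ℝ) 1, 0 ≤ κ t)
    (hδc : ContinuousOn δ (Set.Icc 0 1)) (hδa : AntitoneOn δ (Set.Icc 0 1))
    (hδpos : ∀ t ∈ Set.Icc (0 : ℝ) 1, 0 < δ t)
    (sj sj1 : ℝ) (hsj : 0 ≤ sj) (hlt : sj < sj1) (hsj1 : sj1 ≤ 1)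
    (P : ℕ) (hP : 2 ≤ P)
    (heq : κ sj1 - κ sj + α ^ P * δ sj = δ sj1) :
    ∃ Δs : ℝ, 0 < Δs ∧ Δs < sj1 - sj ∧
      κ (sj + Δs) - κ sj + α * δ sj = δ (sj + Δs) := by
  have hsub : Set.Icc sj sj1 ⊆ Set.Icc (0:ℝ) 1 :=
    Set.Icc_subset_Icc hsj hsj1
  set g : ℝ → ℝ := fun t => κ t - κ sj + α * δ sj - δ t with hg
  have hgc : ContinuousOn g (Set.Icc sj sj1) := by
    apply ContinuousOn.sub
    · exact ((hκc.mono hsub).sub continuousOn_const).add continuousOn_const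
    · exact hδc.mono hsub
  have hsjmem : sj ∈ Set.Icc (0:ℝ) 1 := ⟨hsj, hlt.le.trans hsj1⟩
  have hδsj : 0 < δ sj := hδpos sj hsjmem
  have hga : g sj < 0 := by
    simp only [hg]
    nlinarith
  have hαP : α ^ P < α := by
    calc α ^ P ≤ α ^ 2 := pow_le_pow_of_le_one hα0.le hα1.le hP
    _ < α := by nlinarith
  have hgb : 0 < g sj1 := by
    simp only [hg]
    nlinarith
  have hmem : (0:ℝ) ∈ Set.Icc (g sj) (g sj1) := ⟨hga.le, hgb.le⟩
  obtain ⟨t, ht, hgt⟩ := intermediate_value_Icc hlt.le hgc hmem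
  have h1 : sj < t := by
    rcases lt_or_eq_of_le ht.1 with h | h
    · exact h
    · exfalso; rw [← h] at hgt; exact hga.ne hgt
  have h2 : t < sj1 := by
    rcases lt_or_eq_of_le ht.2 with h | h
    · exact h
    · exfalso; rw [h] at hgt; exact hgb.ne' hgt
  refine ⟨t - sj, by linarith, by linarith, ?_⟩
  have : sj + (t - sj) = t := by ring
  rw [this]
  simp only [hg] at hgt
  linarith
end
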